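/- arXiv:2605.26477 — 8 statements merged into one kernel-verified Lean document; each statement's English description precedes it below -/
import Mathlib

section
/- Let K ≥ 1, let y ∈ [0,1]^K, and let α ∈ ℝ^K satisfy α_k ≥ 1 for all k. Define f₁(α) = Σ_{j=1}^K (y_j − p̂_j(α))². Then for every index i, the partial derivative satisfies |∂f₁/∂α_i| ≤ 2K / S(α) ≤ 2. -/
/-- For `y ∈ [0,1]^K` and `α` with `α_k ≥ 1`, the predictive-error term
`f₁(α) = Σ_j (y_j − p̂_j(α))²` has partial derivatives bounded as
`|∂f₁/∂α_i| ≤ 2K / S(α) ≤ 2`. -/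
theorem predictive_error_gradient_bound (K : ℕ) (hK : 1 ≤ K)
    (y : Fin K → ℝ) (hy : ∀ k, y k ∈ Set.Icc (0 : ℝ) 1)
    (α : Fin K → ℝ) (hα : ∀ k, 1 ≤ α k) (i : Fin K) :
    ∃ d : ℝ,
      HasDerivAt
        (fun t : ℝ =>
          ∑ j, (y j - Function.update α i t j / ∑ k, Function.update α i t k) ^ 2)
        d (α i) ∧
      |d| ≤ 2 * K / ∑ k, α k ∧ 2 * K / (∑ k, α k) ≤ 2 := by
  classical
  set C : ℝ := ∑ k ∈ Finset.univ \ {i}, α k with hCdef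
  set S : ℝ := ∑ k, α k with hSdef
  have hupd : ∀ t : ℝ, (∑ k, Function.update α i t k) = t + C := by
    intro t
    rw [Finset.sum_update_of_mem (Finset.mem_univ i)]
  have hSC : α i + C = S := by
    have := hupd (α i)
    rw [Function.update_eq_self] at this
    rw [← this, hSdef]
  have hKS : (K : ℝ) ≤ S := by
    have : (K : ℝ) = ∑ _k : Fin K, (1 : ℝ) := by simp
    rw [this, hSdef]
    exact Finset.sum_le_sum fun k _ => hα k
  have hSpos : 0 < S := lt_of_lt_of_le (by exact_mod_cast hK) hKS
  have hαle : ∀ j : Fin K, α j ≤ S := by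
    intro j
    exact Finset.single_le_sum (fun k _ => le_trans zero_le_one (hα k)) (Finset.mem_univ j)
  -- pointwise rewriting of the function
  have hfun : (fun t : ℝ =>
        ∑ j, (y j - Function.update α i t j / ∑ k, Function.update α i t k) ^ 2)
      = fun t : ℝ => ∑ j, (y j - (if j = i then t else α j) / (t + C)) ^ 2 := by
    funext t
    apply Finset.sum_congr rfl
    intro j _
    rw [hupd t, Function.update_apply]
  -- derivative of each summand
  have key : ∀ j : Fin K,
      HasDerivAt (fun t : ℝ => (y j - (if j = i then t else α j) / (t + C)) ^ 2)
        ((2 : ℕ) * (y j - (if j = i then α i else α j) / (α i + C)) ^ (2 - 1) *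
          (0 - ((if j = i then (1 : ℝ) else 0) * (α i + C) -
              (if j = i then α i else α j) * 1) / (α i + C) ^ 2)) (α i) := by
    intro j
    have hnum : HasDerivAt (fun t : ℝ => if j = i then t else α j)
        (if j = i then (1 : ℝ) else 0) (α i) := by
      by_cases h : j = i
      · simpa [h] using (hasDerivAt_id' (α i))
      · simpa [h] using (hasDerivAt_const (α i) (α j))
    have hden : HasDerivAt (fun t : ℝ => t + C) 1 (α i) := (hasDerivAt_id _).add_const _
    have hne : α i + C ≠ 0 := by rw [hSC]; exact ne_of_gt hSpos
    have hq := hnum.div hden hne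
    exact ((hasDerivAt_const (α i) (y j)).sub hq).pow 2
  refine ⟨∑ j, (2 : ℕ) * (y j - (if j = i then α i else α j) / (α i + C)) ^ (2 - 1) *
      (0 - ((if j = i then (1 : ℝ) else 0) * (α i + C) -
          (if j = i then α i else α j) * 1) / (α i + C) ^ 2), ?_, ?_, ?_⟩
  · rw [hfun]
    exact HasDerivAt.fun_sum fun j _ => key j
  · -- bound each term by 2 / S
    have hterm : ∀ j : Fin K,
        |(2 : ℕ) * (y j - (if j = i then α i else α j) / (α i + C)) ^ (2 - 1) *
          (0 - ((if j = i then (1 : ℝ) else 0) * (α i + C) -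
              (if j = i then α i else α j) * 1) / (α i + C) ^ 2)| ≤ 2 / S := by
      intro j
      have hv : (if j = i then α i else α j) = α j := by
        by_cases h : j = i <;> simp [h]
      rw [hv, hSC]
      have hy0 := (hy j).1
      have hy1 := (hy j).2
      have hαj0 : (0 : ℝ) ≤ α j := le_trans zero_le_one (hα j)
      have hpj0 : 0 ≤ α j / S := div_nonneg hαj0 hSpos.le
      have hpj1 : α j / S ≤ 1 := (div_le_one hSpos).2 (hαle j)
      have h1 : |y j - α j / S| ≤ 1 := by
        rw [abs_sub_le_iff]; constructor <;> linarith
      have h2 : |(if j = i then (1 : ℝ) else 0) * S - α j * 1| ≤ S := by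
        by_cases h : j = i
        · simp only [h, if_true, one_mul, mul_one]
          rw [abs_sub_le_iff]; constructor <;> [linarith [le_trans zero_le_one (hα i)]; linarith [hαle i]]
        · simp only [h, if_false, zero_mul, mul_one, zero_sub, abs_neg]
          rw [abs_of_nonneg hαj0]; exact hαle j
      have hS2 : (0:ℝ) < S ^ 2 := by positivity
      calc |(2 : ℕ) * (y j - α j / S) ^ (2 - 1) *
            (0 - ((if j = i then (1 : ℝ) else 0) * S - α j * 1) / S ^ 2)|
          = 2 * |y j - α j / S| *
            (|(if j = i then (1 : ℝ) else 0) * S - α j * 1| / S ^ 2) := by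
            rw [abs_mul, abs_mul, zero_sub, abs_neg, abs_div, abs_of_pos hS2]
            norm_num
        _ ≤ 2 * 1 * (S / S ^ 2) := by
            apply mul_le_mul
            · apply mul_le_mul_of_nonneg_left h1; norm_num
            · gcongr
            · positivity
            · norm_num
        _ = 2 / S := by
            rw [sq]
            field_simp
    calc |∑ j, (2 : ℕ) * (y j - (if j = i then α i else α j) / (α i + C)) ^ (2 - 1) *
          (0 - ((if j = i then (1 : ℝ) else 0) * (α i + C) -
              (if j = i then α i else α j) * 1) / (α i + C) ^ 2)|
        ≤ ∑ j : Fin K, (2 / S) := by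
          refine le_trans (Finset.abs_sum_le_sum_abs _ _) ?_
          exact Finset.sum_le_sum fun j _ => hterm j
      _ = K * (2 / S) := by simp [mul_comm]
      _ = 2 * K / S := by ring
  · rw [div_le_iff₀ hSpos]
    linarith
end

section
/- Let K ≥ 1 and let α ∈ ℝ^K satisfy α_k ≥ 1 for all k. Define the variance penalty f₂(α) = (1 − Σ_{j=1}^K p̂_j(α)²) / (S(α) + 1). Then for every index i, the partial derivative satisfies |∂f₂/∂α_i| ≤ 1/(K+1)² + 2/(K(K+1)). -/
private lemma vpgb_bound (Kr s Q t₀ : ℝ) (hK1 : 1 ≤ Kr) (ht1 : 1 ≤ t₀) (hts : t₀ ≤ s)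
    (hsK : Kr ≤ s) (hQlow : s ^ 2 ≤ Kr * Q) (hQhigh : Q ≤ s ^ 2) :
    |2 * (s - t₀) / (s ^ 2 * (s + 1)) - (s ^ 2 - Q) * (3 * s + 2) / (s ^ 3 * (s + 1) ^ 2)|
      ≤ 1 / (Kr + 1) ^ 2 + 2 / (Kr * (Kr + 1)) := by
  have hK0 : (0 : ℝ) < Kr := by linarith
  have hKp1 : (0 : ℝ) < Kr + 1 := by linarith
  have hs1 : (1 : ℝ) ≤ s := le_trans hK1 hsK
  have hs0 : (0 : ℝ) < s := by linarith
  have hsp1 : (0 : ℝ) < s + 1 := by linarith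
  have hT1nn : (0 : ℝ) ≤ 2 * (s - t₀) / (s ^ 2 * (s + 1)) := by
    apply div_nonneg (by linarith)
    positivity
  have hT2nn : (0 : ℝ) ≤ (s ^ 2 - Q) * (3 * s + 2) / (s ^ 3 * (s + 1) ^ 2) := by
    apply div_nonneg (by nlinarith)
    positivity
  have hT1le : 2 * (s - t₀) / (s ^ 2 * (s + 1)) ≤ 2 / (Kr * (Kr + 1)) := by
    rw [div_le_div_iff₀ (by positivity) (by positivity)]
    have e1 : Kr * (Kr + 1) ≤ s * (s + 1) := by nlinarith
    have e2 : (s - t₀) * (Kr * (Kr + 1)) ≤ s * (s * (s + 1)) :=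
      mul_le_mul (by linarith) e1 (by positivity) (by linarith)
    nlinarith [e2]
  have hT2le : (s ^ 2 - Q) * (3 * s + 2) / (s ^ 3 * (s + 1) ^ 2)
      ≤ (3 * Kr + 2) / (Kr * (Kr + 1) ^ 2) := by
    rw [div_le_div_iff₀ (by positivity) (by positivity)]
    have key : Kr * (s ^ 2 - Q) ≤ (Kr - 1) * s ^ 2 := by nlinarith
    have e1 : (Kr - 1) * (3 * s + 2) ≤ (3 * Kr + 2) * s := by nlinarith
    have e2 : (Kr + 1) ^ 2 ≤ (s + 1) ^ 2 := by nlinarith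
    have e3 : (Kr - 1) * (3 * s + 2) * (Kr + 1) ^ 2 ≤ (3 * Kr + 2) * s * ((s + 1) ^ 2) :=
      mul_le_mul e1 e2 (sq_nonneg _) (by positivity)
    have h4' := mul_le_mul_of_nonneg_right key
      (by positivity : (0 : ℝ) ≤ (3 * s + 2) * (Kr + 1) ^ 2)
    have h5' := mul_le_mul_of_nonneg_left e3 (sq_nonneg s)
    nlinarith
  have hRalt : (3 * Kr + 2) / (Kr * (Kr + 1) ^ 2)
      = 1 / (Kr + 1) ^ 2 + 2 / (Kr * (Kr + 1)) := by
    field_simp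
    ring
  rw [abs_le]
  constructor
  · have h2' := hT2le
    rw [hRalt] at h2'
    linarith [hT1nn]
  · have hpos : (0 : ℝ) ≤ 1 / (Kr + 1) ^ 2 := by positivity
    linarith [hT1le, hT2nn]

private lemma vpgb_aux (Kr A B t₀ : ℝ) (hK1 : 1 ≤ Kr) (ht1 : 1 ≤ t₀) (hAnn : 0 ≤ A)
    (hsK : Kr ≤ t₀ + A) (hQlow : (t₀ + A) ^ 2 ≤ Kr * (t₀ ^ 2 + B))
    (hQhigh : t₀ ^ 2 + B ≤ (t₀ + A) ^ 2) :
    ∃ d : ℝ,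
      HasDerivAt (fun t : ℝ => (1 - (t ^ 2 + B) / (t + A) ^ 2) / ((t + A) + 1)) d t₀ ∧
      |d| ≤ 1 / (Kr + 1) ^ 2 + 2 / (Kr * (Kr + 1)) := by
  have hs1 : (1 : ℝ) ≤ t₀ + A := le_trans hK1 hsK
  have hs0 : (0 : ℝ) < t₀ + A := by linarith
  have hsp1 : (0 : ℝ) < t₀ + A + 1 := by linarith
  have hsq0 : ((t₀ + A) ^ 2 : ℝ) ≠ 0 := pow_ne_zero 2 (ne_of_gt hs0)
  have h1 : HasDerivAt (fun t : ℝ => t + A) 1 t₀ := (hasDerivAt_id t₀).add_const A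
  have h2 : HasDerivAt (fun t : ℝ => (t + A) ^ 2) (2 * (t₀ + A)) t₀ := by
    have := h1.pow 2
    norm_num at this
    exact this
  have h3 : HasDerivAt (fun t : ℝ => t ^ 2 + B) (2 * t₀) t₀ := by
    have := ((hasDerivAt_id t₀).pow 2).add_const B
    norm_num at this
    exact this.add_const B
  have h4 : HasDerivAt (fun t : ℝ => (t ^ 2 + B) / (t + A) ^ 2)
      ((2 * t₀ * (t₀ + A) ^ 2 - (t₀ ^ 2 + B) * (2 * (t₀ + A))) / ((t₀ + A) ^ 2) ^ 2) t₀ :=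
    h3.div h2 hsq0
  have h5 : HasDerivAt (fun t : ℝ => 1 - (t ^ 2 + B) / (t + A) ^ 2)
      (0 - (2 * t₀ * (t₀ + A) ^ 2 - (t₀ ^ 2 + B) * (2 * (t₀ + A))) / ((t₀ + A) ^ 2) ^ 2) t₀ :=
    (hasDerivAt_const t₀ (1 : ℝ)).sub h4
  have h6 : HasDerivAt (fun t : ℝ => (t + A) + 1) 1 t₀ := h1.add_const 1
  have h7 := h5.div h6 (ne_of_gt hsp1)
  refine ⟨_, h7, ?_⟩
  have hd2 : ((0 - (2 * t₀ * (t₀ + A) ^ 2 - (t₀ ^ 2 + B) * (2 * (t₀ + A))) / ((t₀ + A) ^ 2) ^ 2)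
        * ((t₀ + A) + 1) - (1 - (t₀ ^ 2 + B) / (t₀ + A) ^ 2) * 1) / ((t₀ + A) + 1) ^ 2
      = 2 * ((t₀ + A) - t₀) / ((t₀ + A) ^ 2 * ((t₀ + A) + 1))
        - ((t₀ + A) ^ 2 - (t₀ ^ 2 + B)) * (3 * (t₀ + A) + 2)
            / ((t₀ + A) ^ 3 * ((t₀ + A) + 1) ^ 2) := by
    field_simp
    ring
  rw [hd2]
  exact vpgb_bound Kr (t₀ + A) (t₀ ^ 2 + B) t₀ hK1 ht1 (by linarith) hsK hQlow hQhigh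

/-- For `α` with `α_k ≥ 1`, the variance-penalty term
`f₂(α) = (1 − Σ_j p̂_j(α)²) / (S(α) + 1)` has partial derivatives bounded as
`|∂f₂/∂α_i| ≤ 1/(K+1)² + 2/(K(K+1))`. -/
theorem variance_penalty_gradient_bound (K : ℕ) (hK : 1 ≤ K)
    (α : Fin K → ℝ) (hα : ∀ k, 1 ≤ α k) (i : Fin K) :
    ∃ d : ℝ,
      HasDerivAt
        (fun t : ℝ =>
          (1 - ∑ j, (Function.update α i t j / ∑ k, Function.update α i t k) ^ 2)
            / ((∑ k, Function.update α i t k) + 1))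
        d (α i) ∧
      |d| ≤ 1 / ((K : ℝ) + 1) ^ 2 + 2 / ((K : ℝ) * ((K : ℝ) + 1)) := by
  classical
  set A : ℝ := ∑ j ∈ Finset.univ.erase i, α j with hA
  set B : ℝ := ∑ j ∈ Finset.univ.erase i, (α j) ^ 2 with hB
  have hAnn : 0 ≤ A := Finset.sum_nonneg fun j _ => le_trans zero_le_one (hα j)
  have ht1 : 1 ≤ α i := hα i
  -- sum identities
  have hsum : ∀ t : ℝ, (∑ k, Function.update α i t k) = t + A := by
    intro t
    rw [← Finset.add_sum_erase _ _ (Finset.mem_univ i)]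
    simp only [Function.update_self]
    congr 1
    exact Finset.sum_congr rfl fun j hj =>
      Function.update_of_ne (Finset.ne_of_mem_erase hj) _ _
  have hsumsq : ∀ t : ℝ, (∑ j, (Function.update α i t j) ^ 2) = t ^ 2 + B := by
    intro t
    have hup : ∀ j, (Function.update α i t j) ^ 2
        = Function.update (fun k => (α k) ^ 2) i (t ^ 2) j := fun j =>
      Function.apply_update (fun _ x => x ^ 2) α i t j
    simp_rw [hup]
    rw [← Finset.add_sum_erase _ _ (Finset.mem_univ i)]
    simp only [Function.update_self]
    congr 1
    exact Finset.sum_congr rfl fun j hj =>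
      Function.update_of_ne (Finset.ne_of_mem_erase hj) _ _
  -- rewrite the function
  have hfun : (fun t : ℝ =>
          (1 - ∑ j, (Function.update α i t j / ∑ k, Function.update α i t k) ^ 2)
            / ((∑ k, Function.update α i t k) + 1))
      = fun t : ℝ => (1 - (t ^ 2 + B) / (t + A) ^ 2) / ((t + A) + 1) := by
    funext t
    simp only [hsum, div_pow, ← Finset.sum_div, hsumsq]
  rw [hfun]
  -- global sums
  have hsQ : (∑ k, α k) = α i + A := by
    rw [hA, ← Finset.add_sum_erase _ _ (Finset.mem_univ i)]
  have hQs : (∑ k, (α k) ^ 2) = (α i) ^ 2 + B := by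
    rw [hB, ← Finset.add_sum_erase _ _ (Finset.mem_univ i)]
  have hK1 : (1 : ℝ) ≤ (K : ℝ) := by exact_mod_cast hK
  have hsK : (K : ℝ) ≤ α i + A := by
    have h' : (K : ℝ) ≤ ∑ k, α k := by
      calc (K : ℝ) = ∑ _k : Fin K, (1 : ℝ) := by simp
        _ ≤ ∑ k, α k := Finset.sum_le_sum fun k _ => hα k
    linarith [hsQ ▸ h']
  have hQlow : (α i + A) ^ 2 ≤ (K : ℝ) * ((α i) ^ 2 + B) := by
    have := sq_sum_le_card_mul_sum_sq (s := (Finset.univ : Finset (Fin K))) (f := α)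
    rw [hQs, hsQ] at this
    simpa using this
  have hQhigh : (α i) ^ 2 + B ≤ (α i + A) ^ 2 := by
    have := Finset.sum_sq_le_sq_sum_of_nonneg
      (s := (Finset.univ : Finset (Fin K))) (f := α)
      (fun k _ => le_trans zero_le_one (hα k))
    rw [hQs, hsQ] at this
    exact this
  exact vpgb_aux (K : ℝ) A B (α i) hK1 ht1 hAnn hsK hQlow hQhigh
end

section
/- Let K ≥ 1, let λ ∈ ℝ^K be a fixed vector, and let α ∈ ℝ^K have strictly positive entries. Define the effective KL objective D̃(α) = log Γ(S(α)) − Σ_{k=1}^K log Γ(α_k) + Σ_{k=1}^K (α_k − λ_k)(ψ(α_k) − ψ(S(α))). Then for every index i, the partial derivative of D̃ with respect to α_i equals (α_i − λ_i)·ψ′(α_i) − (S(α) − ‖λ‖₁)·ψ′(S(α)). -/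
/-- The digamma function `ψ`, i.e. the derivative of `x ↦ log Γ(x)`. -/
noncomputable def digamma (x : ℝ) : ℝ := deriv (fun y : ℝ => Real.log (Real.Gamma y)) x

/-- The trigamma function `ψ′`, i.e. the derivative of the digamma function. -/
noncomputable def trigamma (x : ℝ) : ℝ := deriv digamma x

lemma gamma_analyticAt {x : ℝ} (hx : 0 < x) : AnalyticAt ℝ Real.Gamma x := by
  have hball : ∀ z ∈ Metric.ball (x : ℂ) x, ∀ m : ℕ, z ≠ -m := by
    intro z hz m hzm
    rw [Metric.mem_ball, hzm] at hz
    have : dist (-(m : ℂ)) (x : ℂ) = x + m := by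
      rw [Complex.dist_eq]
      have : (-(m : ℂ) - (x : ℂ)) = ((-(m : ℝ) - x : ℝ) : ℂ) := by push_cast; ring
      rw [this, Complex.norm_real, Real.norm_eq_abs, abs_of_nonpos (by have : (0:ℝ) ≤ m := Nat.cast_nonneg m; linarith)]
      ring
    rw [this] at hz
    have : (0 : ℝ) ≤ m := Nat.cast_nonneg m
    linarith
  have hdiff : DifferentiableOn ℂ Complex.Gamma (Metric.ball (x : ℂ) x) := fun z hz =>
    (Complex.differentiableAt_Gamma z (hball z hz)).differentiableWithinAt
  have hC : AnalyticAt ℂ Complex.Gamma (x : ℂ) :=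
    hdiff.analyticAt ((Metric.isOpen_ball).mem_nhds (by simpa using hx))
  have h1 : AnalyticAt ℝ (fun y : ℝ => (Complex.Gamma (y : ℂ)).re) x :=
    (Complex.reCLM.analyticAt _).comp
      ((hC.restrictScalars).comp (Complex.ofRealCLM.analyticAt x))
  have heq : Real.Gamma = fun y : ℝ => (Complex.Gamma (y : ℂ)).re := by
    funext y
    rw [Complex.Gamma_ofReal, Complex.ofReal_re]
  rw [heq]
  exact h1

lemma gamma_deriv_analyticAt {x : ℝ} (hx : 0 < x) : AnalyticAt ℝ (deriv Real.Gamma) x := by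
  have h : AnalyticOnNhd ℝ Real.Gamma (Set.Ioi 0) := fun y hy => gamma_analyticAt hy
  exact h.deriv x hx

lemma gamma_diffAt {x : ℝ} (hx : 0 < x) : DifferentiableAt ℝ Real.Gamma x :=
  Real.differentiableAt_Gamma (fun m => by
    have : (0 : ℝ) ≤ m := Nat.cast_nonneg m
    intro h; rw [h] at hx; linarith)

lemma hasDerivAt_logGamma {x : ℝ} (hx : 0 < x) :
    HasDerivAt (fun y : ℝ => Real.log (Real.Gamma y)) (digamma x) x := by
  have hdiff : DifferentiableAt ℝ (fun y : ℝ => Real.log (Real.Gamma y)) x :=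
    (gamma_diffAt hx).log (Real.Gamma_pos_of_pos hx).ne'
  exact hdiff.hasDerivAt

lemma digamma_eq {y : ℝ} (hy : 0 < y) :
    digamma y = deriv Real.Gamma y / Real.Gamma y := by
  have h1 : HasDerivAt (fun t : ℝ => Real.log (Real.Gamma t))
      ((Real.Gamma y)⁻¹ * deriv Real.Gamma y) y :=
    (Real.hasDerivAt_log (Real.Gamma_pos_of_pos hy).ne').comp y (gamma_diffAt hy).hasDerivAt
  have := h1.deriv
  rw [digamma, this]
  field_simp

lemma hasDerivAt_digamma {x : ℝ} (hx : 0 < x) : HasDerivAt digamma (trigamma x) x := by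
  have hg : AnalyticAt ℝ (fun y : ℝ => deriv Real.Gamma y / Real.Gamma y) x :=
    (gamma_deriv_analyticAt hx).div (gamma_analyticAt hx) (Real.Gamma_pos_of_pos hx).ne'
  have hev : (fun y : ℝ => deriv Real.Gamma y / Real.Gamma y) =ᶠ[nhds x] digamma := by
    filter_upwards [isOpen_Ioi.mem_nhds (show x ∈ Set.Ioi (0:ℝ) from hx)] with y hy
    exact (digamma_eq hy).symm
  have hdiff : DifferentiableAt ℝ digamma x :=
    (hg.differentiableAt).congr_of_eventuallyEq hev.symm
  exact hdiff.hasDerivAt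

/-- For the effective KL objective
`D̃(α) = log Γ(S(α)) − Σ_k log Γ(α_k) + Σ_k (α_k − λ_k)(ψ(α_k) − ψ(S(α)))`,
the partial derivative with respect to `α_i` equals
`(α_i − λ_i)·ψ′(α_i) − (S(α) − ‖λ‖₁)·ψ′(S(α))`. -/
theorem effective_kl_partial_deriv (K : ℕ) (hK : 1 ≤ K) (lam α : Fin K → ℝ)
    (hα : ∀ k, 0 < α k) (i : Fin K) :
    HasDerivAt
      (fun t : ℝ =>
        Real.log (Real.Gamma (∑ k, Function.update α i t k))
          - ∑ k, Real.log (Real.Gamma (Function.update α i t k))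
          + ∑ k, (Function.update α i t k - lam k) *
              (digamma (Function.update α i t k) - digamma (∑ k', Function.update α i t k')))
      ((α i - lam i) * trigamma (α i) - ((∑ k, α k) - ∑ k, lam k) * trigamma (∑ k, α k))
      (α i) := by
  classical
  set c : ℝ := ∑ k ∈ Finset.univ \ {i}, α k with hc
  have hcnn : 0 ≤ c := Finset.sum_nonneg fun k _ => (hα k).le
  have hS : (∑ k, α k) = α i + c :=
    Finset.sum_eq_add_sum_sdiff_singleton_of_mem (Finset.mem_univ i) α
  have hSpos : 0 < α i + c := by have := hα i; linarith
  have hsum : ∀ t : ℝ, (∑ k, Function.update α i t k) = t + c := fun t =>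
    Finset.sum_update_of_mem (Finset.mem_univ i) α t
  have hfun : (fun t : ℝ =>
        Real.log (Real.Gamma (∑ k, Function.update α i t k))
          - ∑ k, Real.log (Real.Gamma (Function.update α i t k))
          + ∑ k, (Function.update α i t k - lam k) *
              (digamma (Function.update α i t k) - digamma (∑ k', Function.update α i t k'))) =
      (fun t : ℝ =>
        Real.log (Real.Gamma (t + c))
          - (Real.log (Real.Gamma t) + ∑ k ∈ Finset.univ \ {i}, Real.log (Real.Gamma (α k)))
          + ((t - lam i) * (digamma t - digamma (t + c))
            + ∑ k ∈ Finset.univ \ {i}, (α k - lam k) * (digamma (α k) - digamma (t + c)))) := by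
    funext t
    have h2 : (∑ k, Real.log (Real.Gamma (Function.update α i t k)))
        = Real.log (Real.Gamma t) + ∑ k ∈ Finset.univ \ {i}, Real.log (Real.Gamma (α k)) := by
      have hupd : (fun k => Real.log (Real.Gamma (Function.update α i t k)))
          = Function.update (fun k => Real.log (Real.Gamma (α k))) i (Real.log (Real.Gamma t)) := by
        funext k; by_cases hk : k = i
        · subst hk; simp
        · simp [Function.update_of_ne hk]
      rw [hupd, Finset.sum_update_of_mem (Finset.mem_univ i)]
    have h3 : (∑ k, (Function.update α i t k - lam k) *
          (digamma (Function.update α i t k) - digamma (∑ k', Function.update α i t k')))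
        = (t - lam i) * (digamma t - digamma (t + c))
          + ∑ k ∈ Finset.univ \ {i}, (α k - lam k) * (digamma (α k) - digamma (t + c)) := by
      simp only [hsum]
      have hupd : (fun k => (Function.update α i t k - lam k) *
            (digamma (Function.update α i t k) - digamma (t + c)))
          = Function.update (fun k => (α k - lam k) * (digamma (α k) - digamma (t + c))) i
              ((t - lam i) * (digamma t - digamma (t + c))) := by
        funext k; by_cases hk : k = i
        · subst hk; simp
        · simp [Function.update_of_ne hk]
      rw [hupd, Finset.sum_update_of_mem (Finset.mem_univ i)]
    rw [h2, h3, hsum]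
  rw [hfun]
  have hαi := hα i
  have hlin : HasDerivAt (fun t : ℝ => t + c) 1 (α i) := (hasDerivAt_id (α i)).add_const c
  have h1 : HasDerivAt (fun t : ℝ => Real.log (Real.Gamma (t + c)))
      (digamma (α i + c) * 1) (α i) := ((hasDerivAt_logGamma hSpos).comp (α i) hlin :)
  have h2 : HasDerivAt
      (fun t : ℝ => Real.log (Real.Gamma t) + ∑ k ∈ Finset.univ \ {i}, Real.log (Real.Gamma (α k)))
      (digamma (α i)) (α i) := (hasDerivAt_logGamma hαi).add_const _
  have hdS : HasDerivAt (fun t : ℝ => digamma (t + c)) (trigamma (α i + c) * 1) (α i) :=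
    (hasDerivAt_digamma hSpos).comp (α i) hlin
  have h3a : HasDerivAt (fun t : ℝ => (t - lam i) * (digamma t - digamma (t + c)))
      (1 * (digamma (α i) - digamma (α i + c))
        + (α i - lam i) * (trigamma (α i) - trigamma (α i + c) * 1)) (α i) :=
    ((hasDerivAt_id (α i)).sub_const _).mul ((hasDerivAt_digamma hαi).sub hdS)
  have h3b : HasDerivAt
      (fun t : ℝ => ∑ k ∈ Finset.univ \ {i}, (α k - lam k) * (digamma (α k) - digamma (t + c)))
      (∑ k ∈ Finset.univ \ {i}, (α k - lam k) * (0 - trigamma (α i + c) * 1)) (α i) :=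
    HasDerivAt.fun_sum fun k _ => ((hasDerivAt_const _ _).sub hdS).const_mul _
  have htot := (h1.sub h2).add (h3a.add h3b)
  convert htot using 1
  any_goals rfl
  have he : (∑ k ∈ Finset.univ \ {i}, (α k - lam k) * (0 - trigamma (α i + c) * 1))
      = (∑ k ∈ Finset.univ \ {i}, (α k - lam k)) * (0 - trigamma (α i + c) * 1) :=
    (Finset.sum_mul _ _ _).symm
  have hlam : (∑ k, α k) - (∑ k, lam k)
      = (α i - lam i) + ∑ k ∈ Finset.univ \ {i}, (α k - lam k) := by
    rw [← Finset.sum_sub_distrib]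
    exact Finset.sum_eq_add_sum_sdiff_singleton_of_mem (Finset.mem_univ i) _
  rw [he] at htot
  rw [hS]
  set e := ∑ k ∈ Finset.univ \ {i}, (α k - lam k)
  rw [hS] at hlam
  linarith [mul_comm (trigamma (α i + c)) e,
    congrArg (fun z => z * trigamma (α i + c)) hlam]
end

section
/- For every real x > 0, the trigamma function satisfies the double inequality 1/x < ψ′(x) < 1/x + 1/x². -/
open Real Filter Topology Set Finset

lemma summable_sq_aux {c : ℝ} (hc : 0 < c) :
    Summable (fun n : ℕ => 1 / ((n : ℝ) + c) ^ 2) := by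
  have hs : Summable (fun n : ℕ => 1 / ((n : ℝ) + 1) ^ 2) := by
    have := (summable_nat_add_iff (f := fun n : ℕ => 1 / (n : ℝ) ^ 2) 1).mpr
      (summable_one_div_nat_pow.mpr one_lt_two)
    refine this.congr fun n => by push_cast; ring
  set m := min c 1 with hm
  have hm0 : 0 < m := lt_min hc one_pos
  refine Summable.of_nonneg_of_le (fun n => by positivity)
    (fun n => ?_) (hs.mul_left (1 / m ^ 2))
  have h1 : m * ((n : ℝ) + 1) ≤ (n : ℝ) + c := by
    have h2 : m ≤ 1 := min_le_right _ _
    have h3 : m ≤ c := min_le_left _ _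
    nlinarith [Nat.cast_nonneg (α := ℝ) n]
  have hn1 : (0:ℝ) < (n:ℝ) + 1 := by positivity
  have hnc : (0:ℝ) < (n:ℝ) + c := by positivity
  rw [div_mul_div_comm, one_mul]
  refine one_div_le_one_div_of_le (by positivity) ?_
  have hmn : 0 ≤ m * ((n:ℝ)+1) := by positivity
  calc ((n:ℝ) + c)^2 ≥ (m * ((n:ℝ)+1))^2 := by nlinarith [mul_self_le_mul_self hmn h1]
    _ = m^2 * ((n:ℝ)+1)^2 := by ring

lemma diffAt_logGamma {x : ℝ} (hx : 0 < x) :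
    DifferentiableAt ℝ (fun y : ℝ => Real.log (Real.Gamma y)) x := by
  refine ((Real.differentiableAt_Gamma ?_).log (Real.Gamma_ne_zero ?_)) <;>
  exact fun m => ne_of_gt (by have := Nat.cast_nonneg (α := ℝ) m; linarith)

lemma digamma_rec {x : ℝ} (hx : 0 < x) : digamma (x + 1) = digamma x + 1 / x := by
  unfold digamma
  rw [← deriv_comp_add_const, one_div, ← Real.deriv_log,
    ← deriv_add (diffAt_logGamma hx) (Real.differentiableAt_log hx.ne')]
  apply Filter.EventuallyEq.deriv_eq
  filter_upwards [eventually_gt_nhds hx] with y hy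
  simp only [Real.Gamma_add_one hy.ne',
    Real.log_mul hy.ne' (Real.Gamma_pos_of_pos hy).ne', add_comm]
  rfl

lemma digamma_sum {x : ℝ} (hx : 0 < x) (N : ℕ) :
    digamma (x + N) = digamma x + ∑ k ∈ range N, 1 / (x + k) := by
  induction N with
  | zero => simp
  | succ n ih =>
    have hxn : 0 < x + n := by positivity
    have : x + (n + 1 : ℕ) = (x + n) + 1 := by push_cast; ring
    rw [this, digamma_rec hxn, ih, Finset.sum_range_succ]
    ring

lemma log_le_digamma {y : ℝ} (hy : 0 < y) : Real.log y ≤ digamma (y + 1) := by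
  have hc : ConvexOn ℝ (Ioi 0) (fun y : ℝ => Real.log (Real.Gamma y)) :=
    Real.convexOn_log_Gamma
  have h := hc.slope_le_deriv (Set.mem_Ioi.mpr hy) (by simp [Set.mem_Ioi]; positivity : y + 1 ∈ Ioi (0:ℝ))
    (by linarith) (diffAt_logGamma (by positivity))
  refine le_trans (le_of_eq ?_) h
  rw [slope_def_field, show y + 1 - y = (1:ℝ) by ring, div_one,
    Real.Gamma_add_one hy.ne', Real.log_mul hy.ne' (Real.Gamma_pos_of_pos hy).ne']
  ring

lemma digamma_le_log {y : ℝ} (hy : 0 < y) : digamma (y + 1) ≤ Real.log (y + 1) := by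
  have hc : ConvexOn ℝ (Ioi 0) (fun y : ℝ => Real.log (Real.Gamma y)) :=
    Real.convexOn_log_Gamma
  have h01 : (0:ℝ) < y + 1 := by positivity
  have h := hc.deriv_le_slope (Set.mem_Ioi.mpr h01)
    (by simp [Set.mem_Ioi]; positivity : y + 1 + 1 ∈ Ioi (0:ℝ))
    (by linarith) (diffAt_logGamma h01)
  refine le_trans h (le_of_eq ?_)
  rw [slope_def_field, show y + 1 + 1 - (y+1) = (1:ℝ) by ring, div_one,
    Real.Gamma_add_one h01.ne', Real.log_mul h01.ne' (Real.Gamma_pos_of_pos h01).ne']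
  ring

lemma summable_S {x : ℝ} (hx : 0 < x) :
    Summable (fun n : ℕ => 1 / ((n : ℝ) + 1) - 1 / ((n : ℝ) + x)) := by
  set m := min x 1 with hm
  have hm0 : 0 < m := lt_min hx one_pos
  refine Summable.of_norm_bounded ((summable_sq_aux hm0).mul_left |x - 1|) (fun n => ?_)
  have hn1 : (0:ℝ) < (n:ℝ) + 1 := by positivity
  have hnx : (0:ℝ) < (n:ℝ) + x := by positivity
  have hnm : (0:ℝ) < (n:ℝ) + m := by positivity
  have heq : 1 / ((n : ℝ) + 1) - 1 / ((n : ℝ) + x) = (x - 1) / (((n:ℝ)+1) * ((n:ℝ)+x)) := by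
    field_simp
    ring
  rw [heq, Real.norm_eq_abs, abs_div, abs_of_pos (mul_pos hn1 hnx), mul_one_div]
  have h1 : (n:ℝ) + m ≤ (n:ℝ) + 1 := by
    have := min_le_right x 1; simp only [hm]; linarith
  have h2 : (n:ℝ) + m ≤ (n:ℝ) + x := by
    have := min_le_left x 1; simp only [hm]; linarith
  gcongr
  nlinarith [mul_le_mul h1 h2 hnm.le hn1.le]

lemma digamma_eq_s5 {x : ℝ} (hx : 0 < x) :
    digamma x = digamma 1 + ∑' n : ℕ, (1 / ((n : ℝ) + 1) - 1 / ((n : ℝ) + x)) := by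
  set S := ∑' n : ℕ, (1 / ((n : ℝ) + 1) - 1 / ((n : ℝ) + x)) with hS
  set H : ℕ → ℝ := fun N => ∑ k ∈ range N, 1 / ((k:ℝ) + 1) with hH
  -- the partial sums tend to S
  have hA : Tendsto (fun N : ℕ => ∑ k ∈ range N, (1 / ((k : ℝ) + 1) - 1 / ((k : ℝ) + x)))
      atTop (𝓝 S) := (summable_S hx).hasSum.tendsto_sum_nat
  -- digamma (1 + N) = digamma 1 + H N
  have h1N : ∀ N : ℕ, digamma (1 + N) = digamma 1 + H N := by
    intro N
    rw [digamma_sum one_pos N]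
    congr 1
    exact Finset.sum_congr rfl (fun k _ => by rw [add_comm])
  -- digamma (x + N) - H N tends to digamma 1
  have hC : Tendsto (fun N : ℕ => digamma (x + N) - H N) atTop (𝓝 (digamma 1)) := by
    have hdiff : ∀ N : ℕ, digamma (x + N) - H N - digamma 1
        = digamma (x + N) - digamma (1 + N) := by
      intro N; rw [h1N N]; ring
    have hlow : Tendsto (fun N : ℕ => Real.log (x + N - 1) - Real.log (N + 1))
        atTop (𝓝 0) := by
      have hr : Tendsto (fun N : ℕ => (x + N - 1) / (N + 1)) atTop (𝓝 1) := by
        have h0 : Tendsto (fun N : ℕ => 1 + (x - 2) / ((N:ℝ) + 1)) atTop (𝓝 (1 + 0)) := by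
          refine tendsto_const_nhds.add (Tendsto.div_atTop tendsto_const_nhds ?_)
          exact tendsto_atTop_add_const_right _ _ tendsto_natCast_atTop_atTop
        rw [add_zero] at h0
        refine h0.congr' ?_
        filter_upwards [eventually_gt_atTop 0] with N hN
        have : ((N:ℝ) + 1) ≠ 0 := by positivity
        field_simp
        ring
      have := ((Real.continuousAt_log (by norm_num : (1:ℝ) ≠ 0)).tendsto.comp hr)
      rw [Real.log_one] at this
      refine this.congr' ?_
      filter_upwards [eventually_ge_atTop 2] with N hN
      have hN2 : (2:ℝ) ≤ (N:ℝ) := by exact_mod_cast hN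
      have hpos : 0 < x + N - 1 := by linarith
      simp only [Function.comp]
      rw [Real.log_div hpos.ne' (by positivity)]
    have hup : Tendsto (fun N : ℕ => Real.log (x + N) - Real.log N) atTop (𝓝 0) := by
      have hr : Tendsto (fun N : ℕ => (x + N) / N) atTop (𝓝 1) := by
        have h0 : Tendsto (fun N : ℕ => 1 + x / (N:ℝ)) atTop (𝓝 (1 + 0)) := by
          exact tendsto_const_nhds.add (Tendsto.div_atTop tendsto_const_nhds
            tendsto_natCast_atTop_atTop)
        rw [add_zero] at h0
        refine h0.congr' ?_
        filter_upwards [eventually_gt_atTop 0] with N hN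
        have hN0 : ((N:ℝ)) ≠ 0 := by positivity
        field_simp
        ring
      have := ((Real.continuousAt_log (by norm_num : (1:ℝ) ≠ 0)).tendsto.comp hr)
      rw [Real.log_one] at this
      refine this.congr' ?_
      filter_upwards [eventually_ge_atTop 1] with N hN
      have hN1 : (1:ℝ) ≤ (N:ℝ) := by exact_mod_cast hN
      have hpos : 0 < x + N := by linarith
      simp only [Function.comp]
      rw [Real.log_div hpos.ne' (by positivity)]
    have hsq : Tendsto (fun N : ℕ => digamma (x + N) - digamma (1 + N)) atTop (𝓝 0) := by
      refine tendsto_of_tendsto_of_tendsto_of_le_of_le' hlow hup ?_ ?_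
      · filter_upwards [eventually_ge_atTop 2] with N hN
        have hN2 : (2:ℝ) ≤ (N:ℝ) := by exact_mod_cast hN
        have hy : 0 < x + N - 1 := by linarith
        have h1 : Real.log (x + N - 1) ≤ digamma (x + N) := by
          have := log_le_digamma hy
          rwa [show x + N - 1 + 1 = x + N by ring] at this
        have h2 : digamma (1 + N) ≤ Real.log (1 + N) := by
          have := digamma_le_log (show (0:ℝ) < N by linarith)
          rwa [show (N:ℝ) + 1 = 1 + N by ring] at this
        have e : Real.log (1 + (N:ℝ)) = Real.log ((N:ℝ) + 1) := by ring_nf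
        linarith
      · filter_upwards [eventually_ge_atTop 1] with N hN
        have hN1 : (1:ℝ) ≤ (N:ℝ) := by exact_mod_cast hN
        have h1 : digamma (x + N) ≤ Real.log (x + N) := by
          have := digamma_le_log (show (0:ℝ) < x + N - 1 by linarith)
          rwa [show x + N - 1 + 1 = x + N by ring] at this
        have h2 : Real.log N ≤ digamma (1 + N) := by
          have := log_le_digamma (show (0:ℝ) < N by linarith)
          rwa [show (N:ℝ) + 1 = 1 + N by ring] at this
        linarith
    have : Tendsto (fun N : ℕ => digamma (x + N) - H N - digamma 1) atTop (𝓝 0) := by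
      refine hsq.congr fun N => (hdiff N).symm
    have h := this.add (tendsto_const_nhds (x := digamma 1))
    simpa using h
  -- partial sums equal digamma x - (digamma (x + N) - H N)
  have hB : ∀ N : ℕ, ∑ k ∈ range N, (1 / ((k : ℝ) + 1) - 1 / ((k : ℝ) + x))
      = digamma x - (digamma (x + N) - H N) := by
    intro N
    rw [digamma_sum hx N, Finset.sum_sub_distrib]
    have : ∑ k ∈ range N, 1 / ((k:ℝ) + x) = ∑ k ∈ range N, 1 / (x + (k:ℝ)) :=
      Finset.sum_congr rfl (fun k _ => by rw [add_comm])
    rw [this]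
    ring
  have hA' : Tendsto (fun N : ℕ => digamma x - (digamma (x + N) - H N)) atTop (𝓝 S) := by
    refine hA.congr fun N => hB N
  have hA'' : Tendsto (fun N : ℕ => digamma x - (digamma (x + N) - H N)) atTop
      (𝓝 (digamma x - digamma 1)) := tendsto_const_nhds.sub hC
  have := tendsto_nhds_unique hA' hA''
  rw [this]; ring

lemma trigamma_eq {x : ℝ} (hx : 0 < x) :
    trigamma x = ∑' n : ℕ, 1 / ((n : ℝ) + x) ^ 2 := by
  have hden : HasDerivAt (fun z : ℝ => ∑' n : ℕ, (1 / ((n : ℝ) + 1) - 1 / ((n : ℝ) + z)))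
      (∑' n : ℕ, 1 / ((n : ℝ) + x) ^ 2) x := by
    refine hasDerivAt_tsum_of_isPreconnected
      (u := fun n : ℕ => 1 / ((n : ℝ) + x / 2) ^ 2)
      (g := fun (n : ℕ) (y : ℝ) => 1 / ((n : ℝ) + 1) - 1 / ((n : ℝ) + y))
      (g' := fun (n : ℕ) (y : ℝ) => 1 / ((n : ℝ) + y) ^ 2)
      (summable_sq_aux (half_pos hx)) isOpen_Ioi (convex_Ioi (x / 2)).isPreconnected
      (fun n y hy => ?_) (fun n y hy => ?_)
      (Set.mem_Ioi.mpr (half_lt_self hx)) (summable_S hx)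
      (Set.mem_Ioi.mpr (half_lt_self hx))
    · have hy0 : (0:ℝ) < y := lt_trans (half_pos hx) (Set.mem_Ioi.mp hy)
      have hne : (n : ℝ) + y ≠ 0 := by positivity
      have h := ((hasDerivAt_id y).const_add (n : ℝ)).inv hne
      have h2 := h.const_sub (1 / ((n : ℝ) + 1))
      simp only [id_eq] at h2
      have he : -(-1 / ((n:ℝ) + y) ^ 2) = 1 / ((n:ℝ) + y) ^ 2 := by ring
      rw [he] at h2
      simpa [one_div] using h2
    · have hy' : x / 2 < y := Set.mem_Ioi.mp hy
      have hy0 : (0:ℝ) < y := lt_trans (half_pos hx) hy'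
      have h1 : (0:ℝ) < (n : ℝ) + x / 2 := by positivity
      have h2 : (0:ℝ) < (n : ℝ) + y := by positivity
      rw [Real.norm_eq_abs, abs_of_pos (by positivity)]
      refine one_div_le_one_div_of_le (by positivity) ?_
      nlinarith
  have heq : digamma =ᶠ[𝓝 x]
      (fun z : ℝ => digamma 1 + ∑' n : ℕ, (1 / ((n : ℝ) + 1) - 1 / ((n : ℝ) + z))) := by
    filter_upwards [eventually_gt_nhds hx] with y hy
    exact digamma_eq_s5 hy
  unfold trigamma
  rw [heq.deriv_eq, deriv_const_add]
  exact hden.deriv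


/-- For every real `x > 0`, `1/x < ψ′(x) < 1/x + 1/x²`. -/
theorem trigamma_bounds (x : ℝ) (hx : 0 < x) :
    1 / x < trigamma x ∧ trigamma x < 1 / x + 1 / x ^ 2 := by
  set a : ℕ → ℝ := fun n => 1 / ((n : ℝ) + x) ^ 2 with ha
  set b : ℕ → ℝ := fun n => 1 / ((n : ℝ) + x) - 1 / ((n : ℝ) + 1 + x) with hb
  have hsa : Summable a := by
    refine (summable_sq_aux hx).congr fun n => rfl
  have hbnn : ∀ n, 0 ≤ b n := by
    intro n
    have h1 : (0:ℝ) < (n : ℝ) + x := by positivity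
    have : 1 / ((n:ℝ) + 1 + x) ≤ 1 / ((n:ℝ) + x) :=
      one_div_le_one_div_of_le h1 (by linarith)
    simpa [hb] using sub_nonneg.mpr this
  have hsb : HasSum b (1 / x) := by
    rw [hasSum_iff_tendsto_nat_of_nonneg hbnn]
    have htel : ∀ N : ℕ, ∑ i ∈ range N, b i = 1 / x - 1 / ((N : ℝ) + x) := by
      intro N
      have := Finset.sum_range_sub' (f := fun i : ℕ => 1 / ((i : ℝ) + x)) N
      simp only [Nat.cast_zero, zero_add] at this
      rw [← this]
      refine Finset.sum_congr rfl fun i _ => ?_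
      simp only [hb]
      push_cast
      ring_nf
    have hlim : Tendsto (fun N : ℕ => 1 / x - 1 / ((N : ℝ) + x)) atTop (𝓝 (1 / x - 0)) := by
      refine tendsto_const_nhds.sub (Tendsto.div_atTop tendsto_const_nhds ?_)
      exact tendsto_atTop_add_const_right _ _ tendsto_natCast_atTop_atTop
    rw [sub_zero] at hlim
    exact hlim.congr fun N => (htel N).symm
  have hbe : ∀ n : ℕ, b n = 1 / (((n:ℝ) + x) * ((n:ℝ) + 1 + x)) := by
    intro n
    have h1 : (0:ℝ) < (n : ℝ) + x := by positivity
    have h2 : (0:ℝ) < (n : ℝ) + 1 + x := by positivity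
    simp only [hb]
    field_simp
    ring
  rw [trigamma_eq hx]
  constructor
  · have hlt : ∑' n, b n < ∑' n, a n := by
      refine Summable.tsum_lt_tsum_of_nonneg hbnn (fun n => ?_) (i := 0) ?_ hsa
      · rw [hbe n, ha]
        have h1 : (0:ℝ) < (n : ℝ) + x := by positivity
        refine one_div_le_one_div_of_le (by positivity) (by nlinarith)
      · rw [hbe 0, ha]
        simp only [Nat.cast_zero, zero_add]
        refine one_div_lt_one_div_of_lt (by positivity) (by nlinarith)
    rwa [hsb.tsum_eq] at hlt
  · have h0 : a 0 = 1 / x ^ 2 := by simp [ha]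
    have hshift : ∑' n : ℕ, a n = a 0 + ∑' n : ℕ, a (n + 1) := hsa.tsum_eq_zero_add
    have hlt : ∑' n : ℕ, a (n + 1) < ∑' n, b n := by
      refine Summable.tsum_lt_tsum_of_nonneg (fun n => by positivity) (fun n => ?_) (i := 0) ?_
        hsb.summable
      · rw [hbe n, ha]
        have h1 : (0:ℝ) < (n : ℝ) + x := by positivity
        have hc : ((n:ℕ) + 1 : ℕ) = ((n:ℝ) + 1 : ℝ) := by push_cast; ring
        push_cast
        refine one_div_le_one_div_of_le (by positivity) (by nlinarith)
      · rw [hbe 0, ha]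
        simp only [Nat.cast_zero, zero_add, Nat.cast_one]
        push_cast
        refine one_div_lt_one_div_of_lt (by positivity) (by nlinarith)
    rw [hshift, h0, hsb.tsum_eq] at *
    linarith
end

section
/- Let K ≥ 1, let λ ∈ ℝ^K satisfy λ_j ≥ 1 for all j, and let α ∈ ℝ^K satisfy α_j ≥ λ_j for all j. Then for every index i, |(α_i − λ_i)·ψ′(α_i) − (S(α) − ‖λ‖₁)·ψ′(S(α))| < 2 + 1/(min_j λ_j) + 1/‖λ‖₁. -/
open Filter Topology Real Set Finset

noncomputable def psiF (n : ℕ) (x : ℝ) : ℝ :=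
  x * Real.log n + Real.log (Nat.factorial n) - ∑ j ∈ Finset.range (n + 1), Real.log (x + j)

noncomputable def psiF' (n : ℕ) (x : ℝ) : ℝ :=
  Real.log n - ∑ j ∈ Finset.range (n + 1), 1 / (x + j)

noncomputable def psiF'' (n : ℕ) (x : ℝ) : ℝ :=
  ∑ j ∈ Finset.range (n + 1), 1 / (x + j) ^ 2

noncomputable def psiLim (x : ℝ) : ℝ :=
  -Real.eulerMascheroniConstant - 1 / x + ∑' j : ℕ, x / ((j + 1) * (x + (j + 1)))

noncomputable def triLim (x : ℝ) : ℝ := ∑' j : ℕ, 1 / (x + j) ^ 2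

lemma psiF_tendsto {x : ℝ} (hx : 0 < x) :
    Tendsto (fun n => psiF n x) atTop (𝓝 (Real.log (Real.Gamma x))) := by
  have hG : Tendsto (fun n => Real.log (Real.GammaSeq x n)) atTop
      (𝓝 (Real.log (Real.Gamma x))) :=
    ((Real.continuousAt_log (Real.Gamma_pos_of_pos hx).ne').tendsto).comp
      (Real.GammaSeq_tendsto_Gamma x)
  refine hG.congr' ?_
  filter_upwards [eventually_ge_atTop 1] with n hn
  have hn0 : (0:ℝ) < n := by exact_mod_cast hn
  have hprod : (0:ℝ) < ∏ j ∈ Finset.range (n + 1), (x + j) :=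
    Finset.prod_pos fun j _ => by positivity
  have hfac : (0:ℝ) < (Nat.factorial n : ℝ) := by exact_mod_cast Nat.factorial_pos n
  rw [Real.GammaSeq, Real.log_div (by positivity) hprod.ne', Real.log_mul (by positivity) hfac.ne',
    Real.log_rpow hn0, Real.log_prod (fun j _ => by positivity)]
  rfl

lemma psiF_hasDerivAt (n : ℕ) {x : ℝ} (hx : 0 < x) :
    HasDerivAt (psiF n) (psiF' n x) x := by
  have h1 : HasDerivAt (fun y : ℝ => y * Real.log n + Real.log (Nat.factorial n))
      (Real.log n) x := by
    simpa using ((hasDerivAt_id x).mul_const (Real.log n)).add_const (Real.log (Nat.factorial n))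
  have h2 : HasDerivAt (fun y : ℝ => ∑ j ∈ Finset.range (n + 1), Real.log (y + j))
      (∑ j ∈ Finset.range (n + 1), 1 / (x + j)) x := by
    refine HasDerivAt.fun_sum fun j _ => ?_
    have h : HasDerivAt (fun y : ℝ => Real.log (y + j)) ((x + j)⁻¹ * 1) x :=
      (Real.hasDerivAt_log (by positivity)).comp x ((hasDerivAt_id x).add_const _)
    simpa [one_div] using h
  exact h1.sub h2

lemma psiF'_hasDerivAt (n : ℕ) {x : ℝ} (hx : 0 < x) :
    HasDerivAt (psiF' n) (psiF'' n x) x := by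
  have h2 : HasDerivAt (fun y : ℝ => ∑ j ∈ Finset.range (n + 1), 1 / (y + j))
      (∑ j ∈ Finset.range (n + 1), -(1 / (x + j) ^ 2)) x := by
    refine HasDerivAt.fun_sum fun j _ => ?_
    have h : HasDerivAt (fun y : ℝ => (y + j)⁻¹) (-1 / (x + j) ^ 2) x :=
      ((hasDerivAt_id x).add_const _).inv (by positivity)
    simpa [one_div, neg_div] using h
  have h := (hasDerivAt_const x (Real.log n)).fun_sub h2
  have h' : HasDerivAt (fun y : ℝ => Real.log n - ∑ j ∈ Finset.range (n + 1), 1 / (y + j))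
      (psiF'' n x) x := by
    refine h.congr_deriv ?_
    simp [psiF'']
  exact h'

lemma psiF'_eq (n : ℕ) {x : ℝ} (hx : 0 < x) :
    psiF' n x = (Real.log n - (harmonic n : ℝ) - 1 / x)
      + ∑ j ∈ Finset.range n, x / (((j:ℝ) + 1) * (x + ((j:ℝ) + 1))) := by
  have hsplit : ∑ j ∈ Finset.range (n + 1), 1 / (x + (j:ℝ))
      = ∑ j ∈ Finset.range n, 1 / (x + ((j:ℝ) + 1)) + 1 / x := by
    rw [Finset.sum_range_succ']
    push_cast
    norm_num
  have hhar : ((harmonic n : ℚ) : ℝ) = ∑ j ∈ Finset.range n, 1 / ((j:ℝ) + 1) := by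
    rw [harmonic]
    push_cast
    simp [one_div]
  have hterm : ∀ j ∈ Finset.range n,
      1 / ((j:ℝ) + 1) - x / (((j:ℝ) + 1) * (x + ((j:ℝ) + 1))) = 1 / (x + ((j:ℝ) + 1)) := by
    intro j _
    have h1 : ((j:ℝ) + 1) ≠ 0 := by positivity
    have h2 : (x + ((j:ℝ) + 1)) ≠ 0 := by positivity
    field_simp
    ring
  rw [psiF', hsplit, hhar]
  rw [← Finset.sum_congr rfl hterm, Finset.sum_sub_distrib]
  ring

lemma summable_invsq : Summable (fun j : ℕ => 1 / ((j:ℝ) + 1) ^ 2) := by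
  have h : Summable (fun j : ℕ => 1 / ((j:ℝ)) ^ 2) :=
    Real.summable_one_div_nat_pow.mpr one_lt_two
  have h2 := (summable_nat_add_iff 1).mpr h
  refine h2.congr fun j => ?_
  push_cast
  ring

lemma summable_inv_sq_add {a : ℝ} (ha : 0 < a) : Summable (fun j : ℕ => 1 / (a + (j:ℝ)) ^ 2) := by
  rw [← summable_nat_add_iff 1]
  refine Summable.of_nonneg_of_le (fun j => by positivity) (fun j => ?_) summable_invsq
  push_cast
  apply one_div_le_one_div_of_le (by positivity)
  nlinarith [Nat.cast_nonneg (α := ℝ) j]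

lemma tendstoUniformlyOn_psiF' {a b : ℝ} (ha : 0 < a) :
    TendstoUniformlyOn psiF' psiLim atTop (Icc a b) := by
  have hsum : TendstoUniformlyOn
      (fun N x => ∑ j ∈ Finset.range N, x / (((j:ℝ) + 1) * (x + ((j:ℝ) + 1))))
      (fun x => ∑' j : ℕ, x / (((j:ℝ) + 1) * (x + ((j:ℝ) + 1)))) atTop (Icc a b) := by
    refine tendstoUniformlyOn_tsum_nat (u := fun j => b * (1 / ((j:ℝ) + 1) ^ 2))
      (summable_invsq.mul_left b) ?_
    intro j x hx
    have hx0 : 0 < x := lt_of_lt_of_le ha hx.1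
    have hb : x ≤ b := hx.2
    rw [Real.norm_eq_abs, abs_of_nonneg (by positivity)]
    have hD : ((j:ℝ) + 1) * ((j:ℝ) + 1) ≤ ((j:ℝ) + 1) * (x + ((j:ℝ) + 1)) := by nlinarith
    calc x / (((j:ℝ) + 1) * (x + ((j:ℝ) + 1))) ≤ b / (((j:ℝ) + 1) * ((j:ℝ) + 1)) :=
          div_le_div₀ (le_trans hx0.le hb) hb (by positivity) hD
      _ = b * (1 / ((j:ℝ) + 1) ^ 2) := by rw [sq]; ring
  have hneg : Tendsto (fun n : ℕ => Real.log n - (harmonic n : ℝ))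
      atTop (𝓝 (-Real.eulerMascheroniConstant)) := by
    have h := Real.tendsto_harmonic_sub_log.neg
    refine h.congr fun n => by ring
  have hc : TendstoUniformlyOn (fun n : ℕ => fun x : ℝ => Real.log n - (harmonic n : ℝ) - 1 / x)
      (fun x => -Real.eulerMascheroniConstant - 1 / x) atTop (Icc a b) := by
    rw [Metric.tendstoUniformlyOn_iff]
    intro ε hε
    filter_upwards [Metric.tendsto_nhds.mp hneg ε hε] with n hn x _
    rw [Real.dist_eq] at hn ⊢
    have h : -Real.eulerMascheroniConstant - 1 / x - (Real.log n - (harmonic n : ℝ) - 1 / x)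
        = -(Real.log n - (harmonic n : ℝ) - -Real.eulerMascheroniConstant) := by ring
    rw [h, abs_neg]
    exact hn
  have hcomb := hc.add hsum
  refine hcomb.congr ?_
  filter_upwards with n x hx
  exact (psiF'_eq n (lt_of_lt_of_le ha hx.1)).symm

lemma tendstoUniformlyOn_psiF'' {a : ℝ} (ha : 0 < a) :
    TendstoUniformlyOn psiF'' triLim atTop (Ici a) := by
  have h : TendstoUniformlyOn (fun N x => ∑ j ∈ Finset.range N, 1 / (x + (j:ℝ)) ^ 2)
      (fun x => ∑' j : ℕ, 1 / (x + (j:ℝ)) ^ 2) atTop (Ici a) := by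
    refine tendstoUniformlyOn_tsum_nat (summable_inv_sq_add ha) ?_
    intro j x hx
    have hx0 : 0 < x := lt_of_lt_of_le ha hx
    rw [Real.norm_eq_abs, abs_of_nonneg (by positivity)]
    gcongr
    exact hx
  rw [Metric.tendstoUniformlyOn_iff] at h ⊢
  intro ε hε
  obtain ⟨N, hN⟩ := eventually_atTop.mp (h ε hε)
  exact eventually_atTop.2 ⟨N, fun n hn => hN (n + 1) (le_trans hn (Nat.le_succ n))⟩

lemma tlu_psiF' : TendstoLocallyUniformlyOn psiF' psiLim atTop (Ioi 0) := by
  rw [tendstoLocallyUniformlyOn_iff_forall_isCompact isOpen_Ioi]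
  intro K hK hKc
  rcases K.eq_empty_or_nonempty with rfl | hne
  · exact tendstoUniformlyOn_empty
  · have haK : sInf K ∈ K := hKc.sInf_mem hne
    exact (tendstoUniformlyOn_psiF' (b := sSup K) (hK haK)).mono
      hKc.isBounded.subset_Icc_sInf_sSup

lemma tlu_psiF'' : TendstoLocallyUniformlyOn psiF'' triLim atTop (Ioi 0) := by
  rw [tendstoLocallyUniformlyOn_iff_forall_isCompact isOpen_Ioi]
  intro K hK hKc
  rcases K.eq_empty_or_nonempty with rfl | hne
  · exact tendstoUniformlyOn_empty
  · have haK : sInf K ∈ K := hKc.sInf_mem hne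
    exact (tendstoUniformlyOn_psiF'' (hK haK)).mono
      fun x hx => csInf_le hKc.isBounded.bddBelow hx

lemma logGamma_hasDerivAt {x : ℝ} (hx : 0 < x) :
    HasDerivAt (fun y : ℝ => Real.log (Real.Gamma y)) (psiLim x) x :=
  hasDerivAt_of_tendstoLocallyUniformlyOn isOpen_Ioi tlu_psiF'
    (Eventually.of_forall fun n y hy => psiF_hasDerivAt n hy)
    (fun y hy => psiF_tendsto hy) hx

lemma psiLim_hasDerivAt {x : ℝ} (hx : 0 < x) : HasDerivAt psiLim (triLim x) x :=
  hasDerivAt_of_tendstoLocallyUniformlyOn isOpen_Ioi tlu_psiF''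
    (Eventually.of_forall fun n y hy => psiF'_hasDerivAt n hy)
    (fun y hy => tlu_psiF'.tendsto_at hy) hx

lemma digamma_eq_s7 {x : ℝ} (hx : 0 < x) : digamma x = psiLim x := (logGamma_hasDerivAt hx).deriv

lemma trigamma_eq_s7 {x : ℝ} (hx : 0 < x) : trigamma x = triLim x := by
  have hev : digamma =ᶠ[𝓝 x] psiLim := by
    filter_upwards [isOpen_Ioi.mem_nhds (Set.mem_Ioi.mpr hx)] with y hy using digamma_eq_s7 hy
  rw [trigamma, hev.deriv_eq, (psiLim_hasDerivAt hx).deriv]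

lemma triLim_nonneg {x : ℝ} (hx : 0 < x) : 0 ≤ triLim x :=
  tsum_nonneg fun j => by positivity

lemma telescope_hasSum {x : ℝ} (hx : 0 < x) :
    HasSum (fun j : ℕ => 1 / (x + (j:ℝ)) - 1 / (x + ((j:ℝ) + 1))) (1 / x) := by
  have hnn : ∀ j : ℕ, 0 ≤ 1 / (x + (j:ℝ)) - 1 / (x + ((j:ℝ) + 1)) := by
    intro j
    have h1 : 0 < x + (j:ℝ) := by positivity
    have h : 1 / (x + ((j:ℝ) + 1)) ≤ 1 / (x + (j:ℝ)) := by gcongr; linarith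
    linarith
  rw [hasSum_iff_tendsto_nat_of_nonneg hnn]
  have hps : ∀ n : ℕ, ∑ j ∈ Finset.range n, (1 / (x + (j:ℝ)) - 1 / (x + ((j:ℝ) + 1)))
      = 1 / x - 1 / (x + n) := by
    intro n
    have h := Finset.sum_range_sub' (fun j : ℕ => 1 / (x + (j:ℝ))) n
    simp only [Nat.cast_zero, add_zero] at h
    rw [← h]
    refine Finset.sum_congr rfl fun j _ => ?_
    push_cast
    ring_nf
  simp only [hps]
  have hxt : Tendsto (fun n : ℕ => x + (n:ℝ)) atTop atTop :=
    tendsto_atTop_add_const_left _ x tendsto_natCast_atTop_atTop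
  have h0 : Tendsto (fun n : ℕ => 1 / (x + (n:ℝ))) atTop (𝓝 0) := by
    simpa [one_div, Function.comp_def] using tendsto_inv_atTop_zero.comp hxt
  simpa using tendsto_const_nhds.sub h0

lemma triLim_le {x : ℝ} (hx : 0 < x) : triLim x ≤ 1 / x ^ 2 + 1 / x := by
  have hsum : Summable (fun j : ℕ => 1 / (x + (j:ℝ)) ^ 2) := summable_inv_sq_add hx
  have htel := telescope_hasSum hx
  have hshift : ∑' j : ℕ, 1 / (x + ((j:ℝ) + 1)) ^ 2 ≤ 1 / x := by
    have hle : ∀ j : ℕ, 1 / (x + ((j:ℝ) + 1)) ^ 2 ≤ 1 / (x + (j:ℝ)) - 1 / (x + ((j:ℝ) + 1)) := by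
      intro j
      have h1 : 0 < x + (j:ℝ) := by positivity
      have h2 : 0 < x + ((j:ℝ) + 1) := by positivity
      rw [div_sub_div _ _ h1.ne' h2.ne']
      rw [div_le_div_iff₀ (by positivity) (by positivity)]
      nlinarith
    have hsum2 : Summable (fun j : ℕ => 1 / (x + ((j:ℝ) + 1)) ^ 2) := by
      have h := (summable_nat_add_iff 1).mpr hsum
      refine h.congr fun j => ?_
      push_cast
      ring
    calc ∑' j : ℕ, 1 / (x + ((j:ℝ) + 1)) ^ 2
        ≤ ∑' j : ℕ, (1 / (x + (j:ℝ)) - 1 / (x + ((j:ℝ) + 1))) :=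
          hsum2.tsum_le_tsum hle htel.summable
      _ = 1 / x := htel.tsum_eq
  have heq : triLim x = 1 / x ^ 2 + ∑' j : ℕ, 1 / (x + ((j:ℝ) + 1)) ^ 2 := by
    rw [triLim, hsum.tsum_eq_zero_add]
    push_cast
    norm_num
  rw [heq]
  linarith

lemma trigamma_mul_le {x t : ℝ} (hx : 0 < x) (ht0 : 0 ≤ t) (htx : t ≤ x) :
    t * trigamma x ≤ 1 + 1 / x := by
  rw [trigamma_eq_s7 hx]
  have h1 : t * triLim x ≤ x * triLim x :=
    mul_le_mul_of_nonneg_right htx (triLim_nonneg hx)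
  have h2 : x * triLim x ≤ x * (1 / x ^ 2 + 1 / x) :=
    mul_le_mul_of_nonneg_left (triLim_le hx) hx.le
  have h3 : x * (1 / x ^ 2 + 1 / x) = 1 / x + 1 := by
    field_simp
  linarith

lemma trigamma_mul_nonneg {x t : ℝ} (hx : 0 < x) (ht0 : 0 ≤ t) :
    0 ≤ t * trigamma x := by
  rw [trigamma_eq_s7 hx]
  exact mul_nonneg ht0 (triLim_nonneg hx)

/-- If `λ_j ≥ 1` and `α_j ≥ λ_j` for all `j`, then for every `i`,
`|(α_i − λ_i)·ψ′(α_i) − (S(α) − ‖λ‖₁)·ψ′(S(α))| < 2 + 1/(min_j λ_j) + 1/‖λ‖₁`. -/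
theorem kl_gradient_bound (K : ℕ) (hK : 1 ≤ K) (lam α : Fin K → ℝ)
    (hlam : ∀ j, 1 ≤ lam j) (hα : ∀ j, lam j ≤ α j) (i : Fin K) :
    |(α i - lam i) * trigamma (α i) - ((∑ k, α k) - ∑ k, lam k) * trigamma (∑ k, α k)|
      < 2 + 1 / (⨅ j, lam j) + 1 / ∑ k, lam k := by
  have : Nonempty (Fin K) := ⟨i⟩
  have hlam_pos : ∀ j, 0 < lam j := fun j => lt_of_lt_of_le one_pos (hlam j)
  have hα_pos : ∀ j, 0 < α j := fun j => lt_of_lt_of_le (hlam_pos j) (hα j)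
  have hinf1 : 1 ≤ ⨅ j, lam j := le_ciInf hlam
  have hinf_pos : 0 < ⨅ j, lam j := lt_of_lt_of_le one_pos hinf1
  have hinf_le : (⨅ j, lam j) ≤ lam i := ciInf_le (Set.Finite.bddBelow (Set.finite_range lam)) i
  have hSl_pos : 0 < ∑ k, lam k := Finset.sum_pos (fun j _ => hlam_pos j) ⟨i, Finset.mem_univ i⟩
  have hSα_pos : 0 < ∑ k, α k := Finset.sum_pos (fun j _ => hα_pos j) ⟨i, Finset.mem_univ i⟩
  have hSlα : (∑ k, lam k) ≤ ∑ k, α k := Finset.sum_le_sum fun j _ => hα j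
  -- bounds on the first term
  have ha0 : 0 ≤ (α i - lam i) * trigamma (α i) :=
    trigamma_mul_nonneg (hα_pos i) (by linarith [hα i])
  have ha1 : (α i - lam i) * trigamma (α i) ≤ 1 + 1 / α i :=
    trigamma_mul_le (hα_pos i) (by linarith [hα i]) (by linarith [hlam_pos i])
  have ha2 : 1 / α i ≤ 1 / (⨅ j, lam j) := by
    apply one_div_le_one_div_of_le hinf_pos
    linarith [hα i]
  -- bounds on the second term
  have hb0 : 0 ≤ ((∑ k, α k) - ∑ k, lam k) * trigamma (∑ k, α k) :=
    trigamma_mul_nonneg hSα_pos (by linarith)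
  have hb1 : ((∑ k, α k) - ∑ k, lam k) * trigamma (∑ k, α k) ≤ 1 + 1 / ∑ k, α k :=
    trigamma_mul_le hSα_pos (by linarith) (by linarith)
  have hb2 : 1 / (∑ k, α k) ≤ 1 / ∑ k, lam k := by
    apply one_div_le_one_div_of_le hSl_pos
    exact hSlα
  have hip : 0 < 1 / (⨅ j, lam j) := by positivity
  have hsp : 0 < 1 / ∑ k, lam k := by positivity
  rw [abs_sub_lt_iff]
  constructor <;> linarith
end

section
/- Let K ≥ 1, β ≥ 0, let y ∈ [0,1]^K, let λ ∈ ℝ^K satisfy λ_j ≥ 1 for all j, and let α ∈ ℝ^K satisfy α_j ≥ λ_j for all j. Define the variational loss L(α) = Σ_{j=1}^K (y_j − p̂_j(α))² + (1 − Σ_{j=1}^K p̂_j(α)²)/(S(α)+1) + β·[log Γ(S(α)) − Σ_{k=1}^K log Γ(α_k) + Σ_{k=1}^K (α_k − λ_k)(ψ(α_k) − ψ(S(α)))]. Then for every index i, the partial derivative satisfies |∂L/∂α_i| ≤ 2 + 1/(K+1)² + 2/(K(K+1)) + β·(2 + 1/(min_j λ_j) + 1/‖λ‖₁). -/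
open Real Filter Topology Finset


namespace VIEDL

noncomputable def fser (k : ℕ) (x : ℝ) : ℝ := x / (k+1) - Real.log (1 + x / (k+1))
noncomputable def f1 (k : ℕ) (x : ℝ) : ℝ := 1 / (k+1) - 1 / (x + (k+1))
noncomputable def f2 (k : ℕ) (x : ℝ) : ℝ := 1 / (x + (k+1)) ^ 2

lemma kpos (k : ℕ) : (0:ℝ) < (k:ℝ) + 1 := by positivity

lemma sub_log_nonneg {t : ℝ} (ht : 0 ≤ t) : 0 ≤ t - Real.log (1+t) := by
  have := Real.log_le_sub_one_of_pos (show (0:ℝ) < 1 + t by linarith)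
  linarith

lemma sub_log_le_sq {t : ℝ} (ht : 0 ≤ t) : t - Real.log (1+t) ≤ t^2 := by
  have h1 : 1 - (t - t^2) ≤ Real.exp (-(t - t^2)) := by
    have := Real.add_one_le_exp (-(t - t^2)); linarith
  have hE : 0 < Real.exp (t - t^2) := Real.exp_pos _
  have h2 : (1 - (t - t^2)) * Real.exp (t - t^2) ≤ 1 := by
    have := mul_le_mul_of_nonneg_right h1 hE.le
    rwa [Real.exp_neg, inv_mul_cancel₀ (Real.exp_pos _).ne'] at this
  have h3 : Real.exp (t - t^2) ≤ 1 + t := by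
    have hq : (0:ℝ) < 1 - (t - t^2) := by nlinarith [sq_nonneg (t - 1)]
    have h4 : (1:ℝ) ≤ (1 + t) * (1 - (t - t^2)) := by nlinarith [pow_nonneg ht 3]
    nlinarith
  have := (Real.le_log_iff_exp_le (show (0:ℝ) < 1 + t by linarith)).2 h3
  linarith

lemma summable_invsq : Summable (fun k : ℕ => 1 / ((k:ℝ)+1)^2) := by
  have h : Summable (fun n : ℕ => 1 / (n:ℝ)^2) := by
    simpa using Real.summable_one_div_nat_pow.2 (by norm_num)
  have := (summable_nat_add_iff 1).2 h
  refine this.congr fun k => ?_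
  push_cast
  rfl

lemma fser_nonneg (k : ℕ) {x : ℝ} (hx : 0 ≤ x) : 0 ≤ fser k x :=
  sub_log_nonneg (by positivity)

lemma fser_le (k : ℕ) {x : ℝ} (hx : 0 ≤ x) : fser k x ≤ x^2 * (1/((k:ℝ)+1)^2) := by
  have := sub_log_le_sq (t := x / (k+1)) (by positivity)
  calc fser k x ≤ (x/((k:ℝ)+1))^2 := this
    _ = x^2 * (1/((k:ℝ)+1)^2) := by rw [div_pow]; ring

lemma f1_eq (k : ℕ) {x : ℝ} (hx : 0 < x) : f1 k x = x / (((k:ℝ)+1) * (x + (k+1))) := by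
  have h1 := kpos k
  have h2 : (0:ℝ) < x + (k+1) := by linarith
  unfold f1
  field_simp
  ring

lemma f1_nonneg (k : ℕ) {x : ℝ} (hx : 0 < x) : 0 ≤ f1 k x := by
  rw [f1_eq k hx]; positivity

lemma f1_le (k : ℕ) {x : ℝ} (hx : 0 < x) : f1 k x ≤ x * (1/((k:ℝ)+1)^2) := by
  rw [f1_eq k hx]
  have h1 := kpos k
  have h2 : (0:ℝ) < x + (k+1) := by linarith
  rw [div_le_iff₀ (by positivity)]
  have : ((k:ℝ)+1)^2 ≤ ((k:ℝ)+1) * (x + (k+1)) := by nlinarith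
  calc x = x * (((k:ℝ)+1)^2) * (1/((k:ℝ)+1)^2) := by field_simp
    _ ≤ x * (((k:ℝ)+1) * (x + (k+1))) * (1/((k:ℝ)+1)^2) := by
        apply mul_le_mul_of_nonneg_right (mul_le_mul_of_nonneg_left this hx.le) (by positivity)
    _ = x * (1/((k:ℝ)+1)^2) * (((k:ℝ)+1) * (x + (k+1))) := by ring

lemma f2_nonneg (k : ℕ) {x : ℝ} (hx : 0 < x) : 0 ≤ f2 k x := by
  unfold f2; positivity

lemma f2_le (k : ℕ) {x : ℝ} (hx : 0 < x) : f2 k x ≤ 1/((k:ℝ)+1)^2 := by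
  unfold f2
  have h1 := kpos k
  apply one_div_le_one_div_of_le (by positivity)
  nlinarith

lemma summable_fser {x : ℝ} (hx : 0 ≤ x) : Summable (fun k => fser k x) :=
  Summable.of_nonneg_of_le (fun k => fser_nonneg k hx) (fun k => fser_le k hx)
    (summable_invsq.mul_left (x^2))

lemma summable_f1 {x : ℝ} (hx : 0 < x) : Summable (fun k => f1 k x) :=
  Summable.of_nonneg_of_le (fun k => f1_nonneg k hx) (fun k => f1_le k hx)
    (summable_invsq.mul_left x)

lemma summable_f2 {x : ℝ} (hx : 0 < x) : Summable (fun k => f2 k x) :=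
  Summable.of_nonneg_of_le (fun k => f2_nonneg k hx) (fun k => f2_le k hx) summable_invsq

lemma hasDerivAt_fser (k : ℕ) {x : ℝ} (hx : 0 < x) : HasDerivAt (fser k) (f1 k x) x := by
  have h1 := kpos k
  have hpos : 0 < 1 + x / ((k:ℝ)+1) := by positivity
  have ha : HasDerivAt (fun y : ℝ => y / ((k:ℝ)+1)) (1/((k:ℝ)+1)) x := by
    simpa using (hasDerivAt_id x).div_const ((k:ℝ)+1)
  have hb : HasDerivAt (fun y : ℝ => 1 + y / ((k:ℝ)+1)) (1/((k:ℝ)+1)) x := ha.const_add 1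
  have hc : HasDerivAt (fun y : ℝ => Real.log (1 + y / ((k:ℝ)+1)))
      ((1/((k:ℝ)+1)) / (1 + x / ((k:ℝ)+1))) x := by
    simpa [div_eq_mul_inv] using hb.log hpos.ne'
  have h2 : (0:ℝ) < x + ((k:ℝ)+1) := by linarith
  have key : (1/((k:ℝ)+1)) / (1 + x / ((k:ℝ)+1)) = 1/(x + ((k:ℝ)+1)) := by
    rw [div_eq_div_iff hpos.ne' h2.ne']
    field_simp
    ring
  have := ha.sub hc
  refine this.congr_deriv (Eq.symm ?_)
  simp only [f1, key]

lemma hasDerivAt_f1 (k : ℕ) {x : ℝ} (hx : 0 < x) : HasDerivAt (f1 k) (f2 k x) x := by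
  have h1 := kpos k
  have h2 : (0:ℝ) < x + ((k:ℝ)+1) := by linarith
  have ha : HasDerivAt (fun y : ℝ => y + ((k:ℝ)+1)) 1 x := (hasDerivAt_id x).add_const _
  have hb : HasDerivAt (fun y : ℝ => (y + ((k:ℝ)+1))⁻¹) (-(1 / (x + ((k:ℝ)+1))^2)) x := by
    have := ha.inv h2.ne'
    refine this.congr_deriv (Eq.symm ?_)
    rw [neg_div, one_div]
  have hc := hb.const_sub (1/((k:ℝ)+1))
  have hfun : f1 k = fun y : ℝ => 1/((k:ℝ)+1) - (y + ((k:ℝ)+1))⁻¹ := by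
    funext y; simp [f1, one_div]
  rw [hfun]
  refine hc.congr_deriv (Eq.symm ?_)
  unfold f2
  ring

noncomputable def hzeta (x : ℝ) : ℝ := ∑' k, fser k x
noncomputable def dgam (x : ℝ) : ℝ := ∑' k, f1 k x
noncomputable def tgam (x : ℝ) : ℝ := ∑' k, f2 k x
noncomputable def cEM : ℝ := hzeta 1

lemma hasDerivAt_hzeta {x : ℝ} (hx : 0 < x) : HasDerivAt hzeta (dgam x) x := by
  have hIoo : x ∈ Set.Ioo (0:ℝ) (x+1) := ⟨hx, by linarith⟩
  have := hasDerivAt_tsum_of_isPreconnected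
    (u := fun (k:ℕ) => (x+1) * (1/((k:ℝ)+1)^2)) (summable_invsq.mul_left (x+1))
    isOpen_Ioo (convex_Ioo (0:ℝ) (x+1)).isPreconnected
    (g := fser) (g' := fun k y => f1 k y)
    (fun (k : ℕ) (y : ℝ) hy => hasDerivAt_fser k hy.1)
    (fun (k : ℕ) (y : ℝ) hy => by
      rw [Real.norm_eq_abs, abs_of_nonneg (f1_nonneg k hy.1)]
      calc f1 k y ≤ y * (1/((k:ℝ)+1)^2) := f1_le k hy.1
        _ ≤ (x+1) * (1/((k:ℝ)+1)^2) := by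
            apply mul_le_mul_of_nonneg_right hy.2.le (by positivity))
    hIoo (summable_fser hx.le) hIoo
  exact this

lemma hasDerivAt_dgam {x : ℝ} (hx : 0 < x) : HasDerivAt dgam (tgam x) x := by
  have := hasDerivAt_tsum_of_isPreconnected
    (u := fun (k:ℕ) => 1/((k:ℝ)+1)^2) summable_invsq
    isOpen_Ioi (convex_Ioi (0:ℝ)).isPreconnected
    (g := f1) (g' := fun k y => f2 k y)
    (fun (k : ℕ) (y : ℝ) hy => hasDerivAt_f1 k hy)
    (fun (k : ℕ) (y : ℝ) hy => by
      rw [Real.norm_eq_abs, abs_of_nonneg (f2_nonneg k hy)]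
      exact f2_le k hy)
    hx (summable_f1 hx) hx
  exact this

lemma tgam_nonneg {x : ℝ} (hx : 0 < x) : 0 ≤ tgam x :=
  tsum_nonneg fun k => f2_nonneg k hx

lemma tgam_le {x : ℝ} (hx : 0 < x) : tgam x ≤ 1/x := by
  have hterm : ∀ k : ℕ, f2 k x ≤ 1/(x+k) - 1/(x+(k+1)) := by
    intro k
    have h0 : (0:ℝ) < x + k := by positivity
    have h1 : (0:ℝ) < x + ((k:ℝ)+1) := by linarith
    have heq : 1/(x+(k:ℝ)) - 1/(x+((k:ℝ)+1)) = 1/((x+(k:ℝ))*(x+((k:ℝ)+1))) := by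
      field_simp
      ring
    unfold f2
    rw [heq]
    apply one_div_le_one_div_of_le (by positivity)
    nlinarith
  have htel_nonneg : ∀ k : ℕ, 0 ≤ 1/(x+(k:ℝ)) - 1/(x+((k:ℝ)+1)) := by
    intro k
    have h0 : (0:ℝ) < x + k := by positivity
    have h1 : (0:ℝ) < x + ((k:ℝ)+1) := by linarith
    have := one_div_le_one_div_of_le h0 (by linarith : x+(k:ℝ) ≤ x+((k:ℝ)+1))
    linarith
  have hpartial : ∀ n : ℕ, ∑ k ∈ range n, (1/(x+(k:ℝ)) - 1/(x+((k:ℝ)+1))) = 1/x - 1/(x+(n:ℝ)) := by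
    intro n
    have := Finset.sum_range_sub' (f := fun k : ℕ => 1/(x+(k:ℝ))) n
    simpa using this
  have hsum : Summable (fun k : ℕ => 1/(x+(k:ℝ)) - 1/(x+((k:ℝ)+1))) := by
    apply summable_of_sum_range_le htel_nonneg (c := 1/x)
    intro n
    rw [hpartial n]
    have : (0:ℝ) < x + n := by positivity
    have : 0 < 1/(x+(n:ℝ)) := by positivity
    linarith
  have htsum : ∑' k : ℕ, (1/(x+(k:ℝ)) - 1/(x+((k:ℝ)+1))) = 1/x := by
    have htend : Tendsto (fun n : ℕ => ∑ k ∈ range n, (1/(x+(k:ℝ)) - 1/(x+((k:ℝ)+1))))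
        atTop (𝓝 (1/x)) := by
      simp only [hpartial]
      have h2 : Tendsto (fun n : ℕ => 1/(x+(n:ℝ))) atTop (𝓝 0) := by
        have := tendsto_inv_atTop_zero.comp
          (tendsto_atTop_add_const_left atTop x (tendsto_natCast_atTop_atTop (R := ℝ)))
        simpa [Function.comp_def, one_div] using this
      have := (tendsto_const_nhds (x := (1/x : ℝ)) (f := atTop)).sub h2
      simpa using this
    exact (hsum.hasSum_iff_tendsto_nat.2 htend).tsum_eq
  calc tgam x ≤ ∑' k : ℕ, (1/(x+(k:ℝ)) - 1/(x+((k:ℝ)+1))) :=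
        Summable.tsum_le_tsum hterm (summable_f2 hx) hsum
    _ = 1/x := htsum

lemma log_gammaSeq_eq {x : ℝ} (hx : 0 < x) {n : ℕ} (hn : 1 ≤ n) :
    x * ((∑ k ∈ range n, 1/((k:ℝ)+1)) - Real.log n)
      = (∑ k ∈ range n, fser k x) - Real.log x - Real.log (Real.GammaSeq x n) := by
  have hn0 : (0:ℝ) < n := by exact_mod_cast hn
  have hfact : Real.log ((Nat.factorial n : ℕ) : ℝ) = ∑ k ∈ range n, Real.log ((k:ℝ)+1) := by
    rw [← Finset.prod_range_add_one_eq_factorial n]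
    push_cast
    rw [Real.log_prod]
    intro j _
    have : (0:ℝ) < (j:ℝ)+1 := by positivity
    exact this.ne'
  have hsum_fser : ∑ k ∈ range n, fser k x
      = (∑ k ∈ range n, x * (1/((k:ℝ)+1)))
        - ((∑ k ∈ range n, Real.log (x+((k:ℝ)+1))) - ∑ k ∈ range n, Real.log ((k:ℝ)+1)) := by
    have hterm : ∀ k ∈ range n, fser k x
        = x * (1/((k:ℝ)+1)) - (Real.log (x+((k:ℝ)+1)) - Real.log ((k:ℝ)+1)) := by
      intro k _
      have h1 := kpos k
      have h2 : (0:ℝ) < x + ((k:ℝ)+1) := by linarith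
      unfold fser
      rw [show (1 + x/((k:ℝ)+1)) = (x+((k:ℝ)+1))/((k:ℝ)+1) by field_simp; ring,
        Real.log_div h2.ne' h1.ne', mul_one_div]
    rw [Finset.sum_congr rfl hterm, Finset.sum_sub_distrib, Finset.sum_sub_distrib]
  have hprod_pos : ∀ j ∈ range (n+1), (0:ℝ) < x + (j:ℝ) := fun j _ => by positivity
  have hlogGS : Real.log (Real.GammaSeq x n)
      = x * Real.log n + (∑ k ∈ range n, Real.log ((k:ℝ)+1)) - Real.log x
        - ∑ k ∈ range n, Real.log (x+((k:ℝ)+1)) := by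
    unfold Real.GammaSeq
    have hne : ∏ j ∈ range (n+1), (x + (j:ℝ)) ≠ 0 :=
      Finset.prod_ne_zero_iff.2 fun j hj => (hprod_pos j hj).ne'
    rw [Real.log_div (by positivity) hne,
        Real.log_mul (by positivity) (by positivity), Real.log_rpow hn0,
        Real.log_prod (fun j hj => (hprod_pos j hj).ne'), hfact,
        Finset.sum_range_succ' (fun j : ℕ => Real.log (x + (j:ℝ))) n]
    push_cast
    rw [add_zero]
    ring
  rw [hsum_fser, hlogGS, mul_sub, Finset.mul_sum]
  ring

lemma tendsto_xH {x : ℝ} (hx : 0 < x) :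
    Tendsto (fun n : ℕ => x * ((∑ k ∈ range n, 1/((k:ℝ)+1)) - Real.log n)) atTop
      (𝓝 (hzeta x - Real.log x - Real.log (Real.Gamma x))) := by
  have T1 : Tendsto (fun n => ∑ k ∈ range n, fser k x) atTop (𝓝 (hzeta x)) :=
    (summable_fser hx.le).hasSum.tendsto_sum_nat
  have T2 : Tendsto (fun n => Real.log (Real.GammaSeq x n)) atTop
      (𝓝 (Real.log (Real.Gamma x))) :=
    ((Real.continuousAt_log (Real.Gamma_pos_of_pos hx).ne').tendsto).comp
      (Real.GammaSeq_tendsto_Gamma x)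
  have T3 := (T1.sub (tendsto_const_nhds (x := Real.log x))).sub T2
  refine Tendsto.congr' ?_ T3
  filter_upwards [eventually_ge_atTop 1] with n hn
  exact (log_gammaSeq_eq hx hn).symm

lemma logGamma_eq {x : ℝ} (hx : 0 < x) :
    Real.log (Real.Gamma x) = hzeta x - cEM * x - Real.log x := by
  have h1 := tendsto_xH one_pos
  have h1' : Tendsto (fun n : ℕ => (∑ k ∈ range n, 1/((k:ℝ)+1)) - Real.log n) atTop (𝓝 cEM) := by
    have : hzeta 1 - Real.log 1 - Real.log (Real.Gamma 1) = cEM := by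
      simp [cEM, Real.Gamma_one]
    rw [← this]
    refine Tendsto.congr (fun n => ?_) h1
    ring
  have hx' := h1'.const_mul x
  have := tendsto_nhds_unique (tendsto_xH hx) hx'
  linarith

lemma hasDerivAt_logGamma {x : ℝ} (hx : 0 < x) :
    HasDerivAt (fun y : ℝ => Real.log (Real.Gamma y)) (dgam x - cEM - 1/x) x := by
  have hG : HasDerivAt (fun y : ℝ => hzeta y - cEM * y - Real.log y) (dgam x - cEM - 1/x) x := by
    have h1 := hasDerivAt_hzeta hx
    have h2 : HasDerivAt (fun y : ℝ => cEM * y) cEM x := by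
      simpa using (hasDerivAt_id x).const_mul cEM
    have h3 := Real.hasDerivAt_log hx.ne'
    have := (h1.sub h2).sub h3
    refine this.congr_deriv (Eq.symm ?_)
    rw [one_div]
  apply hG.congr_of_eventuallyEq
  filter_upwards [isOpen_Ioi.mem_nhds (show x ∈ Set.Ioi 0 from hx)] with y hy
  exact logGamma_eq hy

lemma digamma_eq {x : ℝ} (hx : 0 < x) : digamma x = dgam x - cEM - 1/x :=
  (hasDerivAt_logGamma hx).deriv

lemma hasDerivAt_logGamma' {x : ℝ} (hx : 0 < x) :
    HasDerivAt (fun y : ℝ => Real.log (Real.Gamma y)) (digamma x) x := by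
  rw [digamma_eq hx]
  exact hasDerivAt_logGamma hx

lemma hasDerivAt_digamma {x : ℝ} (hx : 0 < x) :
    HasDerivAt digamma (tgam x + 1/x^2) x := by
  have hD : HasDerivAt (fun y : ℝ => dgam y - cEM - 1/y) (tgam x + 1/x^2) x := by
    have h1 := hasDerivAt_dgam hx
    have h2 : HasDerivAt (fun y : ℝ => 1/y) (-(1/x^2)) x := by
      have := hasDerivAt_inv hx.ne'
      refine (by simpa [one_div] using this : HasDerivAt (fun y : ℝ => 1/y) (-(x^2)⁻¹) x).congr_deriv (Eq.symm ?_)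
      rw [one_div]
    have := (h1.sub_const cEM).sub h2
    refine this.congr_deriv (Eq.symm ?_)
    ring
  apply hD.congr_of_eventuallyEq
  filter_upwards [isOpen_Ioi.mem_nhds (show x ∈ Set.Ioi 0 from hx)] with y hy
  exact digamma_eq hy

lemma digamma_deriv_bound {x : ℝ} (hx : 0 < x) :
    ∃ T : ℝ, HasDerivAt digamma T x ∧ 0 ≤ T ∧ T ≤ 1/x + 1/x^2 :=
  ⟨tgam x + 1/x^2, hasDerivAt_digamma hx,
    add_nonneg (tgam_nonneg hx) (by positivity),
    add_le_add_left (tgam_le hx) _⟩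

end VIEDL

set_option maxHeartbeats 2000000 in
open Finset in
/-- The VI-EDL variational loss
`L(α) = Σ_j (y_j − p̂_j(α))² + (1 − Σ_j p̂_j(α)²)/(S(α)+1)
  + β·[log Γ(S(α)) − Σ_k log Γ(α_k) + Σ_k (α_k − λ_k)(ψ(α_k) − ψ(S(α)))]`
has partial derivatives bounded by
`2 + 1/(K+1)² + 2/(K(K+1)) + β·(2 + 1/(min_j λ_j) + 1/‖λ‖₁)`. -/
theorem viedl_loss_lipschitz (K : ℕ) (hK : 1 ≤ K) (β : ℝ) (hβ : 0 ≤ β)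
    (y : Fin K → ℝ) (hy : ∀ k, y k ∈ Set.Icc (0 : ℝ) 1)
    (lam : Fin K → ℝ) (hlam : ∀ j, 1 ≤ lam j)
    (α : Fin K → ℝ) (hα : ∀ j, lam j ≤ α j) (i : Fin K) :
    ∃ d : ℝ,
      HasDerivAt
        (fun t : ℝ =>
          (∑ j, (y j - Function.update α i t j / ∑ k, Function.update α i t k) ^ 2)
          + (1 - ∑ j, (Function.update α i t j / ∑ k, Function.update α i t k) ^ 2)
              / ((∑ k, Function.update α i t k) + 1)
          + β * (Real.log (Real.Gamma (∑ k, Function.update α i t k))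
              - ∑ k, Real.log (Real.Gamma (Function.update α i t k))
              + ∑ k, (Function.update α i t k - lam k) *
                  (digamma (Function.update α i t k)
                    - digamma (∑ k', Function.update α i t k'))))
        d (α i) ∧
      |d| ≤ 2 + 1 / ((K : ℝ) + 1) ^ 2 + 2 / ((K : ℝ) * ((K : ℝ) + 1))
              + β * (2 + 1 / (⨅ j, lam j) + 1 / ∑ k, lam k) := by
  classical
  have hα1 : ∀ j, (1:ℝ) ≤ α j := fun j => le_trans (hlam j) (hα j)
  set C : ℝ := ∑ k ∈ Finset.univ \ {i}, α k with hCdef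
  have hupd : ∀ t : ℝ, (∑ k, Function.update α i t k) = t + C := fun t => by
    rw [Finset.sum_update_of_mem (Finset.mem_univ i)]
  have hCerase : ∑ k ∈ Finset.univ.erase i, α k = C := by
    rw [Finset.erase_eq]
  have hCnn : 0 ≤ C := Finset.sum_nonneg fun j _ => le_trans zero_le_one (hα1 j)
  have hti : (1:ℝ) ≤ α i := hα1 i
  have hSpos : (0:ℝ) < α i + C := by linarith
  have hSsum : (∑ k, α k) = α i + C := by
    rw [← hCerase]
    exact (Finset.add_sum_erase _ α (Finset.mem_univ i)).symm
  have hK1 : (1:ℝ) ≤ (K:ℝ) := by exact_mod_cast hK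
  have hΛK : (K:ℝ) ≤ ∑ k, lam k := by
    calc (K:ℝ) = ∑ _k : Fin K, (1:ℝ) := by simp
    _ ≤ ∑ k, lam k := Finset.sum_le_sum fun k _ => hlam k
  have hSΛ : (∑ k, lam k) ≤ α i + C := by
    rw [← hSsum]
    exact Finset.sum_le_sum fun k _ => hα k
  have hKS : (K:ℝ) ≤ α i + C := le_trans hΛK hSΛ
  have hS1 : (1:ℝ) ≤ α i + C := le_trans hK1 hKS
  have haj : ∀ j, α j ≤ α i + C := fun j => by
    rw [← hSsum]
    exact Finset.single_le_sum (fun k _ => le_trans zero_le_one (hα1 k)) (Finset.mem_univ j)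
  have hS2 : (0:ℝ) < (α i + C)^2 := pow_pos hSpos 2
  -- rewrite the loss in update-free form
  have hvi : ∀ (t:ℝ) j, Function.update α i t j = if j = i then t else α j :=
    fun t j => Function.update_apply α i t j
  have hα0 : ∀ j, (0:ℝ) < α j := fun j => lt_of_lt_of_le one_pos (hα1 j)
  have hupd2 : ∀ t : ℝ, (∑ k : Fin K, if k = i then t else α k) = t + C := fun t => by
    rw [← hupd t]
    exact Finset.sum_congr rfl fun k _ => (hvi t k).symm
  have hFG : (fun t : ℝ =>
          (∑ j, (y j - Function.update α i t j / ∑ k, Function.update α i t k) ^ 2)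
          + (1 - ∑ j, (Function.update α i t j / ∑ k, Function.update α i t k) ^ 2)
              / ((∑ k, Function.update α i t k) + 1)
          + β * (Real.log (Real.Gamma (∑ k, Function.update α i t k))
              - ∑ k, Real.log (Real.Gamma (Function.update α i t k))
              + ∑ k, (Function.update α i t k - lam k) *
                  (digamma (Function.update α i t k)
                    - digamma (∑ k', Function.update α i t k'))))
      = (fun t : ℝ =>
          (∑ j, (y j - (if j = i then t else α j) / (t + C)) ^ 2)
          + (1 - ∑ j, ((if j = i then t else α j) / (t + C)) ^ 2) / ((t + C) + 1)
          + β * (Real.log (Real.Gamma (t + C))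
              - ∑ k, Real.log (Real.Gamma (if k = i then t else α k))
              + ∑ k, ((if k = i then t else α k) - lam k) *
                  (digamma (if k = i then t else α k) - digamma (t + C)))) := by
    funext t
    simp only [hvi, hupd2]
  -- trigamma bounds
  obtain ⟨Ti, hTi, hTi0, hTiub⟩ := VIEDL.digamma_deriv_bound (show (0:ℝ) < α i by linarith)
  obtain ⟨TS, hTS, hTS0, hTSub⟩ := VIEDL.digamma_deriv_bound hSpos
  have hid : HasDerivAt (fun t : ℝ => t + C) 1 (α i) := (hasDerivAt_id (α i)).add_const C
  have hSne : α i + C ≠ 0 := hSpos.ne'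
  have hval : ∀ j : Fin K, (if j = i then α i else α j) = α j := fun j => by
    by_cases h : j = i
    · rw [if_pos h, h]
    · rw [if_neg h]
  -- quotient derivatives
  have hu : ∀ j : Fin K, HasDerivAt (fun t : ℝ => (if j = i then t else α j) / (t + C))
      (if j = i then C / (α i + C)^2 else -(α j / (α i + C)^2)) (α i) := fun j => by
    by_cases h : j = i
    · simp only [if_pos h]
      have h2 := (hasDerivAt_id (α i)).div hid hSne
      refine h2.congr_deriv (Eq.symm ?_)
      simp only [id_eq]
      ring
    · simp only [if_neg h]
      have h2 := (hasDerivAt_const (α i) (α j)).div hid hSne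
      refine h2.congr_deriv (Eq.symm ?_)
      ring
  have huval : ∀ j : Fin K, (if j = i then α i else α j) / (α i + C) = α j / (α i + C) :=
    fun j => by rw [hval j]
  -- MSE term
  have hA : HasDerivAt (fun t : ℝ => ∑ j, (y j - (if j = i then t else α j) / (t + C)) ^ 2)
      (∑ j, 2 * (y j - α j / (α i + C)) *
        (-(if j = i then C / (α i + C)^2 else -(α j / (α i + C)^2)))) (α i) := by
    apply HasDerivAt.fun_sum
    intro j _
    have h1 := ((hu j).const_sub (y j)).pow 2
    refine h1.congr_deriv (Eq.symm ?_)
    simp only [huval j]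
    ring
  -- variance term
  have hQd : HasDerivAt (fun t : ℝ => ∑ j, ((if j = i then t else α j) / (t + C)) ^ 2)
      (∑ j, 2 * (α j / (α i + C)) *
        (if j = i then C / (α i + C)^2 else -(α j / (α i + C)^2))) (α i) := by
    apply HasDerivAt.fun_sum
    intro j _
    have h1 := (hu j).pow 2
    refine h1.congr_deriv (Eq.symm ?_)
    simp only [huval j]
    ring
  have hB : HasDerivAt (fun t : ℝ =>
      (1 - ∑ j, ((if j = i then t else α j) / (t + C)) ^ 2) / ((t + C) + 1))
      ((-(∑ j, 2 * (α j / (α i + C)) *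
          (if j = i then C / (α i + C)^2 else -(α j / (α i + C)^2))) * ((α i + C) + 1)
        - (1 - ∑ j, (α j / (α i + C))^2) * 1) / ((α i + C) + 1)^2) (α i) := by
    have hden : HasDerivAt (fun t : ℝ => (t + C) + 1) 1 (α i) := hid.add_const 1
    have hdne : (α i + C) + 1 ≠ 0 := by positivity
    have h1 := (hQd.const_sub 1).div hden hdne
    refine h1.congr_deriv (Eq.symm ?_)
    simp only [hval]
  -- KL term
  have hTSc : HasDerivAt (fun t : ℝ => digamma (t + C)) (TS * 1) (α i) := hTS.comp (α i) hid
  have hL1 : HasDerivAt (fun t : ℝ => Real.log (Real.Gamma (t + C)))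
      (digamma (α i + C) * 1) (α i) :=
    ((VIEDL.hasDerivAt_logGamma' hSpos).comp (α i) hid :)
  have hL2 : HasDerivAt (fun t : ℝ => ∑ k, Real.log (Real.Gamma (if k = i then t else α k)))
      (∑ k, if k = i then digamma (α i) else 0) (α i) := by
    apply HasDerivAt.fun_sum
    intro k _
    by_cases h : k = i
    · simp only [if_pos h]
      exact VIEDL.hasDerivAt_logGamma' (show (0:ℝ) < α i by linarith)
    · simp only [if_neg h]
      exact hasDerivAt_const _ _
  have hL3 : HasDerivAt (fun t : ℝ => ∑ k, ((if k = i then t else α k) - lam k) *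
        (digamma (if k = i then t else α k) - digamma (t + C)))
      (∑ k, if k = i
        then 1 * (digamma (α i) - digamma (α i + C)) + (α i - lam i) * (Ti - TS * 1)
        else (α k - lam k) * -(TS * 1)) (α i) := by
    apply HasDerivAt.fun_sum
    intro k _
    by_cases h : k = i
    · simp only [if_pos h, h]
      have h1 : HasDerivAt (fun t : ℝ => t - lam i) 1 (α i) :=
        (hasDerivAt_id (α i)).sub_const (lam i)
      have h2 : HasDerivAt (fun t : ℝ => digamma t - digamma (t + C)) (Ti - TS * 1) (α i) :=
        hTi.sub hTSc
      exact h1.mul h2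
    · simp only [if_neg h]
      have h2 : HasDerivAt (fun t : ℝ => digamma (α k) - digamma (t + C)) (-(TS * 1)) (α i) := by
        exact hTSc.const_sub (digamma (α k))
      exact h2.const_mul (α k - lam k)
  have hKL : HasDerivAt (fun t : ℝ =>
      β * (Real.log (Real.Gamma (t + C))
        - ∑ k, Real.log (Real.Gamma (if k = i then t else α k))
        + ∑ k, ((if k = i then t else α k) - lam k) *
            (digamma (if k = i then t else α k) - digamma (t + C))))
      (β * ((digamma (α i + C) * 1 - ∑ k, if k = i then digamma (α i) else 0)
        + ∑ k, if k = i
          then 1 * (digamma (α i) - digamma (α i + C)) + (α i - lam i) * (Ti - TS * 1)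
          else (α k - lam k) * -(TS * 1))) (α i) :=
    ((hL1.sub hL2).add hL3).const_mul β
  have hG := (hA.add hB).add hKL
  -- clean up the derivative value
  set Λ : ℝ := ∑ k, lam k with hΛdef
  have hL2val : (∑ k, if k = i then digamma (α i) else 0) = digamma (α i) := by
    rw [Finset.sum_ite_eq' Finset.univ i (fun _ => digamma (α i))]
    simp
  have hL3val : (∑ k, if k = i
        then 1 * (digamma (α i) - digamma (α i + C)) + (α i - lam i) * (Ti - TS * 1)
        else (α k - lam k) * -(TS * 1))
      = (1 * (digamma (α i) - digamma (α i + C)) + (α i - lam i) * (Ti - TS * 1))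
        + (C - (Λ - lam i)) * -(TS * 1) := by
    rw [← Finset.add_sum_erase _ _ (Finset.mem_univ i), if_pos rfl]
    congr 1
    have h1 : ∀ k ∈ Finset.univ.erase i, (if k = i
        then 1 * (digamma (α i) - digamma (α i + C)) + (α i - lam i) * (Ti - TS * 1)
        else (α k - lam k) * -(TS * 1)) = (α k - lam k) * -(TS * 1) :=
      fun k hk => if_neg (Finset.ne_of_mem_erase hk)
    rw [Finset.sum_congr rfl h1, ← Finset.sum_mul, Finset.sum_sub_distrib, hCerase]
    have h2 : ∑ k ∈ Finset.univ.erase i, lam k = Λ - lam i := by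
      have := Finset.add_sum_erase Finset.univ lam (Finset.mem_univ i)
      rw [hΛdef]
      linarith
    rw [h2]
  -- the final derivative value
  have hKLval : β * ((digamma (α i + C) * 1 - ∑ k, if k = i then digamma (α i) else 0)
        + ∑ k, if k = i
          then 1 * (digamma (α i) - digamma (α i + C)) + (α i - lam i) * (Ti - TS * 1)
          else (α k - lam k) * -(TS * 1))
      = β * ((α i - lam i) * Ti - ((α i + C) - Λ) * TS) := by
    rw [hL2val, hL3val]
    ring
  rw [hKLval] at hG
  refine ⟨_, by rw [hFG]; exact hG, ?_⟩
  set Q' : ℝ := ∑ j, 2 * (α j / (α i + C)) *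
      (if j = i then C / (α i + C)^2 else -(α j / (α i + C)^2)) with hQ'def
  set Q : ℝ := ∑ j, (α j / (α i + C))^2 with hQdef
  -- ===================== bound =====================
  have hyb : ∀ j, |y j - α j / (α i + C)| ≤ 1 := by
    intro j
    have h1 := (hy j).1
    have h2 := (hy j).2
    have hp0 : 0 ≤ α j / (α i + C) := div_nonneg (hα0 j).le hSpos.le
    have hp1 : α j / (α i + C) ≤ 1 := by
      rw [div_le_one hSpos]; exact haj j
    rw [abs_le]; constructor <;> linarith
  -- bound for the MSE part
  have hdA : |∑ j, 2 * (y j - α j / (α i + C)) *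
      (-(if j = i then C / (α i + C)^2 else -(α j / (α i + C)^2)))| ≤ 1 := by
    have habs : ∀ j : Fin K, |2 * (y j - α j / (α i + C)) *
        (-(if j = i then C / (α i + C)^2 else -(α j / (α i + C)^2)))|
        ≤ 2 * (if j = i then C / (α i + C)^2 else α j / (α i + C)^2) := by
      intro j
      rw [abs_mul, abs_mul, abs_neg, abs_two]
      have h1 : |(if j = i then C / (α i + C)^2 else -(α j / (α i + C)^2))|
          = (if j = i then C / (α i + C)^2 else α j / (α i + C)^2) := by
        by_cases h : j = i
        · rw [if_pos h, if_pos h, abs_of_nonneg (div_nonneg hCnn hS2.le)]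
        · rw [if_neg h, if_neg h, abs_neg, abs_of_nonneg (div_nonneg (hα0 j).le hS2.le)]
      rw [h1]
      have h2 : (0:ℝ) ≤ (if j = i then C / (α i + C)^2 else α j / (α i + C)^2) := by
        by_cases h : j = i
        · rw [if_pos h]; exact div_nonneg hCnn hS2.le
        · rw [if_neg h]; exact div_nonneg (hα0 j).le hS2.le
      calc 2 * |y j - α j / (α i + C)| * (if j = i then C / (α i + C)^2 else α j / (α i + C)^2)
          ≤ 2 * 1 * (if j = i then C / (α i + C)^2 else α j / (α i + C)^2) := by
            apply mul_le_mul_of_nonneg_right _ h2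
            have := hyb j
            linarith
        _ = 2 * (if j = i then C / (α i + C)^2 else α j / (α i + C)^2) := by ring
    calc |∑ j, 2 * (y j - α j / (α i + C)) *
        (-(if j = i then C / (α i + C)^2 else -(α j / (α i + C)^2)))|
        ≤ ∑ j, |2 * (y j - α j / (α i + C)) *
            (-(if j = i then C / (α i + C)^2 else -(α j / (α i + C)^2)))| :=
          Finset.abs_sum_le_sum_abs _ _
      _ ≤ ∑ j, 2 * (if j = i then C / (α i + C)^2 else α j / (α i + C)^2) :=
          Finset.sum_le_sum fun j _ => habs j
      _ = 2 * (C / (α i + C)^2) + ∑ j ∈ Finset.univ.erase i, 2 * (α j / (α i + C)^2) := by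
          rw [← Finset.add_sum_erase _ _ (Finset.mem_univ i), if_pos rfl]
          congr 1
          exact Finset.sum_congr rfl fun j hj => by rw [if_neg (Finset.ne_of_mem_erase hj)]
      _ = 2 * (C / (α i + C)^2) + 2 * (C / (α i + C)^2) := by
          rw [← Finset.mul_sum, ← Finset.sum_div, hCerase]
      _ ≤ 1 := by
          have h4 : 4 * C ≤ (α i + C)^2 := by nlinarith [sq_nonneg (α i + C - 2)]
          have h5 : 2 * (C / (α i + C)^2) + 2 * (C / (α i + C)^2) = 4 * C / (α i + C)^2 := by
            ring
          rw [h5, div_le_one hS2]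
          exact h4
  -- bound for the variance part
  have hCle : C ≤ α i + C := by linarith
  have hQ'split : Q' = 2 * (α i / (α i + C)) * (C / (α i + C)^2)
      + ∑ j ∈ Finset.univ.erase i, 2 * (α j / (α i + C)) * (-(α j / (α i + C)^2)) := by
    rw [hQ'def, ← Finset.add_sum_erase _ _ (Finset.mem_univ i), if_pos rfl]
    congr 1
    exact Finset.sum_congr rfl fun j hj => by rw [if_neg (Finset.ne_of_mem_erase hj)]
  have hQ'ub : Q' ≤ 2 / (α i + C) := by
    rw [hQ'split]
    have h1 : ∑ j ∈ Finset.univ.erase i, 2 * (α j / (α i + C)) * (-(α j / (α i + C)^2)) ≤ 0 := by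
      apply Finset.sum_nonpos
      intro j _
      have h0 : (0:ℝ) ≤ α j := le_trans zero_le_one (hα1 j)
      have h3 : (0:ℝ) ≤ 2 * (α j / (α i + C)) * (α j / (α i + C)^2) :=
        mul_nonneg (mul_nonneg (by norm_num) (div_nonneg h0 hSpos.le)) (div_nonneg h0 hS2.le)
      have h4 : 2 * (α j / (α i + C)) * (-(α j / (α i + C)^2))
          = -(2 * (α j / (α i + C)) * (α j / (α i + C)^2)) := by ring
      rw [h4]
      linarith
    have h2 : 2 * (α i / (α i + C)) * (C / (α i + C)^2) ≤ 2 / (α i + C) := by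
      rw [show 2 * (α i / (α i + C)) * (C / (α i + C)^2)
            = 2 * (α i * C) / (α i + C)^3 by field_simp,
          div_le_div_iff₀ (pow_pos hSpos 3) hSpos]
      have hai : α i ≤ α i + C := by linarith
      have key : α i * C * (α i + C) ≤ ((α i + C) * (α i + C)) * (α i + C) :=
        mul_le_mul_of_nonneg_right (mul_le_mul hai hCle hCnn hSpos.le) hSpos.le
      nlinarith [key]
    linarith
  have hQ'lb : -(2 / (α i + C)) ≤ Q' := by
    rw [hQ'split]
    have h0 : (0:ℝ) ≤ 2 * (α i / (α i + C)) * (C / (α i + C)^2) :=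
      mul_nonneg (mul_nonneg (by norm_num) (div_nonneg (hα0 i).le hSpos.le))
        (div_nonneg hCnn hS2.le)
    have hsq : ∑ j ∈ Finset.univ.erase i, (α j)^2 ≤ C^2 := by
      have h1 : ∀ j ∈ Finset.univ.erase i, (α j)^2 ≤ α j * C := by
        intro j hj
        have h2 : α j ≤ C := by
          rw [← hCerase]
          exact Finset.single_le_sum (fun k _ => le_trans zero_le_one (hα1 k)) hj
        have h3 : (0:ℝ) ≤ α j := le_trans zero_le_one (hα1 j)
        nlinarith
      calc ∑ j ∈ Finset.univ.erase i, (α j)^2 ≤ ∑ j ∈ Finset.univ.erase i, α j * C :=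
            Finset.sum_le_sum h1
        _ = C * C := by rw [← Finset.sum_mul, hCerase]
        _ = C^2 := by ring
    have h1 : ∑ j ∈ Finset.univ.erase i, 2 * (α j / (α i + C)) * (-(α j / (α i + C)^2))
        = -(2 / (α i + C)^3 * ∑ j ∈ Finset.univ.erase i, (α j)^2) := by
      rw [Finset.mul_sum, ← Finset.sum_neg_distrib]
      exact Finset.sum_congr rfl fun j _ => by field_simp
    have h2 : 2 / (α i + C)^3 * (∑ j ∈ Finset.univ.erase i, (α j)^2) ≤ 2 / (α i + C) := by
      calc 2 / (α i + C)^3 * (∑ j ∈ Finset.univ.erase i, (α j)^2)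
          ≤ 2 / (α i + C)^3 * (α i + C)^2 := by
            apply mul_le_mul_of_nonneg_left _ (div_nonneg (by norm_num) (pow_pos hSpos 3).le)
            calc (∑ j ∈ Finset.univ.erase i, (α j)^2) ≤ C^2 := hsq
              _ ≤ (α i + C)^2 := by nlinarith
        _ = 2 / (α i + C) := by
            field_simp
    rw [h1]
    linarith
  have hQ0 : 0 ≤ Q := by
    rw [hQdef]
    exact Finset.sum_nonneg fun j _ => sq_nonneg _
  have hQ1 : Q ≤ 1 := by
    rw [hQdef]
    calc ∑ j, (α j / (α i + C))^2 ≤ ∑ j, α j / (α i + C) := by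
          apply Finset.sum_le_sum
          intro j _
          have h0 : (0:ℝ) ≤ α j / (α i + C) := div_nonneg (hα0 j).le hSpos.le
          have h1 : α j / (α i + C) ≤ 1 := by rw [div_le_one hSpos]; exact haj j
          nlinarith
      _ = (∑ j, α j) / (α i + C) := by rw [Finset.sum_div]
      _ = 1 := by rw [hSsum]; field_simp
  have hSp1 : (0:ℝ) < (α i + C) + 1 := by linarith
  have hdB : |(-Q' * ((α i + C) + 1) - (1 - Q) * 1) / ((α i + C) + 1)^2|
      ≤ 2 / ((K:ℝ) * ((K:ℝ)+1)) + 1 / ((K:ℝ)+1)^2 := by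
    have heq : (-Q' * ((α i + C) + 1) - (1 - Q) * 1) / ((α i + C) + 1)^2
        = -Q' / ((α i + C) + 1) - (1 - Q) / ((α i + C) + 1)^2 := by
      field_simp
    rw [heq]
    have hQ'abs : |Q'| ≤ 2 / (α i + C) := abs_le.mpr ⟨hQ'lb, hQ'ub⟩
    have h1 : |(-Q') / ((α i + C) + 1)| ≤ 2 / ((K:ℝ) * ((K:ℝ)+1)) := by
      rw [abs_div, abs_neg, abs_of_pos hSp1]
      calc |Q'| / ((α i + C) + 1) ≤ (2 / (α i + C)) / ((α i + C) + 1) :=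
            (div_le_div_iff_of_pos_right hSp1).2 hQ'abs
        _ = 2 / ((α i + C) * ((α i + C) + 1)) := by rw [div_div]
        _ ≤ 2 / ((K:ℝ) * ((K:ℝ)+1)) := by
            apply div_le_div_of_nonneg_left (by norm_num) (by positivity)
            nlinarith
    have h2 : |(1 - Q) / ((α i + C) + 1)^2| ≤ 1 / ((K:ℝ)+1)^2 := by
      rw [abs_div, abs_of_nonneg (by linarith : (0:ℝ) ≤ 1 - Q),
          abs_of_nonneg (by positivity : (0:ℝ) ≤ ((α i + C) + 1)^2)]
      calc (1 - Q) / ((α i + C) + 1)^2 ≤ 1 / ((α i + C) + 1)^2 :=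
            (div_le_div_iff_of_pos_right (pow_pos hSp1 2)).2 (by linarith)
        _ ≤ 1 / ((K:ℝ)+1)^2 := by
            apply div_le_div_of_nonneg_left (by norm_num) (by positivity)
            nlinarith
    calc |(-Q') / ((α i + C) + 1) - (1 - Q) / ((α i + C) + 1)^2|
        ≤ |(-Q') / ((α i + C) + 1)| + |(1 - Q) / ((α i + C) + 1)^2| := abs_sub _ _
      _ ≤ 2 / ((K:ℝ) * ((K:ℝ)+1)) + 1 / ((K:ℝ)+1)^2 := add_le_add h1 h2
  -- bound for the KL part
  have hΛ1 : (1:ℝ) ≤ Λ := le_trans hK1 hΛK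
  have hkl_a0 : 0 ≤ (α i - lam i) * Ti := mul_nonneg (by linarith [hα i]) hTi0
  have hkl_a1 : (α i - lam i) * Ti ≤ 1 := by
    have h1 : (α i - lam i) * Ti ≤ (α i - lam i) * (1 / α i + 1 / (α i)^2) :=
      mul_le_mul_of_nonneg_left hTiub (by linarith [hα i])
    have h2 : (α i - lam i) * (1 / α i + 1 / (α i)^2) ≤ 1 := by
      have hne : α i ≠ 0 := (show (0:ℝ) < α i by linarith).ne'
      rw [show 1 / α i + 1 / (α i)^2 = (α i + 1) / (α i)^2 by field_simp,
          ← mul_div_assoc, div_le_one (pow_pos (show (0:ℝ) < α i by linarith) 2)]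
      nlinarith [hα i, hlam i, hti]
    linarith
  have hkl_b0 : 0 ≤ ((α i + C) - Λ) * TS := mul_nonneg (by linarith) hTS0
  have hkl_b1 : ((α i + C) - Λ) * TS ≤ 1 := by
    have h1 : ((α i + C) - Λ) * TS ≤ ((α i + C) - Λ) * (1 / (α i + C) + 1 / (α i + C)^2) :=
      mul_le_mul_of_nonneg_left hTSub (by linarith)
    have h2 : ((α i + C) - Λ) * (1 / (α i + C) + 1 / (α i + C)^2) ≤ 1 := by
      have hne : (α i + C) ≠ 0 := hSpos.ne'
      rw [show 1 / (α i + C) + 1 / (α i + C)^2 = ((α i + C) + 1) / (α i + C)^2 by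
            field_simp,
          ← mul_div_assoc, div_le_one hS2]
      nlinarith
    linarith
  have hdKL : |(α i - lam i) * Ti - ((α i + C) - Λ) * TS| ≤ 1 :=
    abs_le.mpr ⟨by linarith, by linarith⟩
  -- put everything together
  haveI : Nonempty (Fin K) := Fin.pos_iff_nonempty.1 hK
  have hinf : (1:ℝ) ≤ ⨅ j, lam j := le_ciInf hlam
  have hinv1 : (0:ℝ) ≤ 1 / (⨅ j, lam j) := one_div_nonneg.2 (by linarith)
  have hinv2 : (0:ℝ) ≤ 1 / Λ := one_div_nonneg.2 (by linarith)
  have habs1 := abs_add_le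
    ((∑ j, 2 * (y j - α j / (α i + C)) *
        (-(if j = i then C / (α i + C)^2 else -(α j / (α i + C)^2))))
      + (-Q' * ((α i + C) + 1) - (1 - Q) * 1) / ((α i + C) + 1)^2)
    (β * ((α i - lam i) * Ti - ((α i + C) - Λ) * TS))
  have habs2 := abs_add_le
    (∑ j, 2 * (y j - α j / (α i + C)) *
        (-(if j = i then C / (α i + C)^2 else -(α j / (α i + C)^2))))
    ((-Q' * ((α i + C) + 1) - (1 - Q) * 1) / ((α i + C) + 1)^2)
  have habs3 : |β * ((α i - lam i) * Ti - ((α i + C) - Λ) * TS)| ≤ β * 1 := by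
    rw [abs_mul, abs_of_nonneg hβ]
    exact mul_le_mul_of_nonneg_left hdKL hβ
  have hfin : β * 1 ≤ β * (2 + 1 / (⨅ j, lam j) + 1 / Λ) :=
    mul_le_mul_of_nonneg_left (by linarith) hβ
  linarith [hdA, hdB, habs1, habs2, habs3, hfin]
end

section
/- Let n ≥ 1, let T ⊆ ℝⁿ be a nonempty finite set, and let φ : ℝ → ℝ be L-Lipschitz with φ(0) = 0, for some L ≥ 0. Then E_σ[ max_{t ∈ T} Σ_{i=1}^n σ_i·φ(t_i) ] ≤ L · E_σ[ max_{t ∈ T} Σ_{i=1}^n σ_i·t_i ], where σ is drawn uniformly from {−1, 1}ⁿ. -/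
open Finset

private lemma lemA {α : Type*} (T : Finset α) (hT : T.Nonempty) (f u v : α → ℝ)
    (h : ∀ s ∈ T, ∀ t ∈ T, u s - u t ≤ |v s - v t|) :
    T.sup' hT (fun t => f t + u t) + T.sup' hT (fun t => f t - u t)
      ≤ T.sup' hT (fun t => f t + v t) + T.sup' hT (fun t => f t - v t) := by
  obtain ⟨s, hs, hs'⟩ := T.exists_mem_eq_sup' hT (fun t => f t + u t)
  obtain ⟨t, ht, ht'⟩ := T.exists_mem_eq_sup' hT (fun t => f t - u t)
  rw [hs', ht']
  have h1 := h s hs t ht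
  have h2 : f s + v s ≤ T.sup' hT (fun t => f t + v t) := le_sup' (fun t => f t + v t) hs
  have h3 : f t - v t ≤ T.sup' hT (fun t => f t - v t) := le_sup' (fun t => f t - v t) ht
  have h4 : f t + v t ≤ T.sup' hT (fun t => f t + v t) := le_sup' (fun t => f t + v t) ht
  have h5 : f s - v s ≤ T.sup' hT (fun t => f t - v t) := le_sup' (fun t => f t - v t) hs
  rcases le_total (v t) (v s) with hc | hc
  · rw [abs_of_nonneg (by linarith)] at h1; linarith
  · rw [abs_of_nonpos (by linarith)] at h1; linarith

private lemma sum_pair_le {β : Type*} [Fintype β] (F G : β → ℝ) (e : β → β)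
    (he : Function.Involutive e)
    (h : ∀ σ, F σ + F (e σ) ≤ G σ + G (e σ)) :
    ∑ σ, F σ ≤ ∑ σ, G σ := by
  have hF : ∑ σ, F (e σ) = ∑ σ, F σ := Equiv.sum_comp he.toPerm F
  have hG : ∑ σ, G (e σ) = ∑ σ, G σ := Equiv.sum_comp he.toPerm G
  have := Finset.sum_le_sum (fun σ (_ : σ ∈ Finset.univ) => h σ)
  rw [Finset.sum_add_distrib, Finset.sum_add_distrib, hF, hG] at this
  linarith

private lemma flip_invol (n : ℕ) (k : Fin n) :
    Function.Involutive (fun σ : Fin n → Bool => Function.update σ k (!σ k)) := by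
  intro σ; funext i
  by_cases h : i = k
  · subst h; simp
  · simp [Function.update_of_ne h]

private lemma sup'_const_mul {α : Type*} (T : Finset α) (hT : T.Nonempty)
    (g : α → ℝ) (L : ℝ) (hL : 0 ≤ L) :
    T.sup' hT (fun t => L * g t) = L * T.sup' hT g := by
  obtain ⟨s, hs, hs'⟩ := T.exists_mem_eq_sup' hT g
  refine le_antisymm (Finset.sup'_le _ _ fun t ht =>
    mul_le_mul_of_nonneg_left (Finset.le_sup' g ht) hL) ?_
  rw [hs']
  exact Finset.le_sup' (fun t => L * g t) hs

private lemma step_lemma (n : ℕ) (T : Finset (Fin n → ℝ)) (hT : T.Nonempty)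
    (φ : ℝ → ℝ) (L : ℝ) (hL : 0 ≤ L)
    (hφ : ∀ a b : ℝ, |φ a - φ b| ≤ L * |a - b|)
    (K : Finset (Fin n)) (k : Fin n) (hk : k ∉ K) :
    (∑ σ : Fin n → Bool, T.sup' hT (fun t => ∑ i,
        (if σ i then (1:ℝ) else -1) * (if i ∈ K then L * t i else φ (t i))))
    ≤ ∑ σ : Fin n → Bool, T.sup' hT (fun t => ∑ i,
        (if σ i then (1:ℝ) else -1) * (if i ∈ insert k K then L * t i else φ (t i))) := by
  apply sum_pair_le _ _ _ (flip_invol n k)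
  intro σ
  have hεabs : |(if σ k then (1:ℝ) else -1)| = 1 := by cases h : σ k <;> simp [h]
  have hε' : (if Function.update σ k (!σ k) k then (1:ℝ) else -1)
      = -(if σ k then (1:ℝ) else -1) := by
    cases h : σ k <;> simp [h]
  -- the common part
  set ε : ℝ := if σ k then (1:ℝ) else -1 with hε
  set f : (Fin n → ℝ) → ℝ := fun t => ∑ i ∈ Finset.univ.erase k,
      (if σ i then (1:ℝ) else -1) * (if i ∈ K then L * t i else φ (t i)) with hf
  have erase_congr : ∀ (t : Fin n → ℝ) (c : (Fin n) → ℝ → ℝ),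
      ∑ i ∈ Finset.univ.erase k, (if Function.update σ k (!σ k) i then (1:ℝ) else -1) * c i (t i)
      = ∑ i ∈ Finset.univ.erase k, (if σ i then (1:ℝ) else -1) * c i (t i) := by
    intro t c
    exact Finset.sum_congr rfl fun i hi => by
      rw [Function.update_of_ne (Finset.ne_of_mem_erase hi)]
  have insert_congr : ∀ (t : Fin n → ℝ) (s : Fin n → Bool),
      ∑ i ∈ Finset.univ.erase k, (if s i then (1:ℝ) else -1) *
          (if i ∈ insert k K then L * t i else φ (t i))
      = ∑ i ∈ Finset.univ.erase k, (if s i then (1:ℝ) else -1) *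
          (if i ∈ K then L * t i else φ (t i)) := by
    intro t s
    exact Finset.sum_congr rfl fun i hi => by
      have : i ∈ insert k K ↔ i ∈ K := by
        simp [Finset.mem_insert, Finset.ne_of_mem_erase hi]
      rw [if_congr this rfl rfl]
  have E1 : T.sup' hT (fun t => ∑ i,
        (if σ i then (1:ℝ) else -1) * (if i ∈ K then L * t i else φ (t i)))
      = T.sup' hT (fun t => f t + ε * φ (t k)) := by
    refine Finset.sup'_congr hT rfl fun t ht => ?_
    rw [← Finset.add_sum_erase _ _ (Finset.mem_univ k), if_neg hk, ← hε]
    simp only [hf]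
    ring
  have E2 : T.sup' hT (fun t => ∑ i,
        (if Function.update σ k (!σ k) i then (1:ℝ) else -1) * (if i ∈ K then L * t i else φ (t i)))
      = T.sup' hT (fun t => f t - ε * φ (t k)) := by
    refine Finset.sup'_congr hT rfl fun t ht => ?_
    rw [← Finset.add_sum_erase _ _ (Finset.mem_univ k), if_neg hk, hε',
      erase_congr t (fun i x => if i ∈ K then L * x else φ x)]
    simp only [hf]
    ring
  have E3 : T.sup' hT (fun t => ∑ i,
        (if σ i then (1:ℝ) else -1) * (if i ∈ insert k K then L * t i else φ (t i)))
      = T.sup' hT (fun t => f t + ε * (L * t k)) := by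
    refine Finset.sup'_congr hT rfl fun t ht => ?_
    rw [← Finset.add_sum_erase _ _ (Finset.mem_univ k),
      if_pos (Finset.mem_insert_self k K), ← hε, insert_congr t σ]
    simp only [hf]
    ring
  have E4 : T.sup' hT (fun t => ∑ i,
        (if Function.update σ k (!σ k) i then (1:ℝ) else -1) *
          (if i ∈ insert k K then L * t i else φ (t i)))
      = T.sup' hT (fun t => f t - ε * (L * t k)) := by
    refine Finset.sup'_congr hT rfl fun t ht => ?_
    rw [← Finset.add_sum_erase _ _ (Finset.mem_univ k),
      if_pos (Finset.mem_insert_self k K), hε',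
      insert_congr t (Function.update σ k (!σ k)),
      erase_congr t (fun i x => if i ∈ K then L * x else φ x)]
    simp only [hf]
    ring
  rw [E1, E2, E3, E4]
  apply lemA
  intro s hs t ht
  have h2 : |ε * (L * s k) - ε * (L * t k)| = L * |s k - t k| := by
    have h3 : ε * (L * s k) - ε * (L * t k) = (ε * L) * (s k - t k) := by ring
    rw [h3, abs_mul, abs_mul, hεabs, abs_of_nonneg hL, one_mul]
  rw [h2]
  calc ε * φ (s k) - ε * φ (t k) = ε * (φ (s k) - φ (t k)) := by ring
    _ ≤ |ε * (φ (s k) - φ (t k))| := le_abs_self _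
    _ = |φ (s k) - φ (t k)| := by rw [abs_mul, hεabs, one_mul]
    _ ≤ L * |s k - t k| := hφ _ _

/-- Ledoux–Talagrand contraction: For a nonempty finite `T ⊆ ℝⁿ` and an
`L`-Lipschitz `φ : ℝ → ℝ` with `φ(0) = 0`,
`E_σ[ max_{t ∈ T} Σ_i σ_i·φ(t_i) ] ≤ L · E_σ[ max_{t ∈ T} Σ_i σ_i·t_i ]`,
where `σ` is uniform on `{−1,1}ⁿ` (encoded via `Fin n → Bool`). -/
theorem ledoux_talagrand_contraction (n : ℕ) (hn : 1 ≤ n)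
    (T : Finset (Fin n → ℝ)) (hT : T.Nonempty)
    (φ : ℝ → ℝ) (L : ℝ) (hL : 0 ≤ L)
    (hφ : ∀ a b : ℝ, |φ a - φ b| ≤ L * |a - b|) (hφ0 : φ 0 = 0) :
    (∑ σ : Fin n → Bool,
        T.sup' hT (fun t => ∑ i, (if σ i then (1 : ℝ) else -1) * φ (t i))) / 2 ^ n
      ≤ L * ((∑ σ : Fin n → Bool,
          T.sup' hT (fun t => ∑ i, (if σ i then (1 : ℝ) else -1) * t i)) / 2 ^ n) := by
  have key : ∀ K : Finset (Fin n),
      (∑ σ : Fin n → Bool, T.sup' hT (fun t => ∑ i,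
          (if σ i then (1:ℝ) else -1) * (if i ∈ (∅ : Finset (Fin n)) then L * t i else φ (t i))))
      ≤ ∑ σ : Fin n → Bool, T.sup' hT (fun t => ∑ i,
          (if σ i then (1:ℝ) else -1) * (if i ∈ K then L * t i else φ (t i))) := by
    intro K
    induction K using Finset.induction_on with
    | empty => exact le_refl _
    | insert _ _ hk => exact le_trans (by assumption) (step_lemma n T hT φ L hL hφ _ _ hk)
  have h0 := key Finset.univ
  simp only [Finset.notMem_empty, if_false, Finset.mem_univ, if_true] at h0
  have h1 : ∀ σ : Fin n → Bool,
      T.sup' hT (fun t => ∑ i, (if σ i then (1:ℝ) else -1) * (L * t i))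
      = L * T.sup' hT (fun t => ∑ i, (if σ i then (1:ℝ) else -1) * t i) := by
    intro σ
    rw [← sup'_const_mul T hT _ L hL]
    refine Finset.sup'_congr hT rfl fun t ht => ?_
    rw [Finset.mul_sum]
    exact Finset.sum_congr rfl fun i _ => by ring
  rw [Finset.sum_congr rfl (fun σ _ => h1 σ), ← Finset.mul_sum] at h0
  rw [mul_div_assoc']
  have hpow : (0:ℝ) < 2 ^ n := by positivity
  exact div_le_div_of_nonneg_right h0 hpow.le
end

section
/- Let Z be a measurable space with probability measure μ, let n ≥ 1, let H be a nonempty countable set of measurable functions h : Z → ℝ with 0 ≤ h(z) ≤ B for all h ∈ H and z ∈ Z, where B > 0, and let 0 < δ < 1. Define R̂(z₁, …, zₙ) = E_σ[ sup_{h ∈ H} (1/n) Σ_{i=1}^n σ_i h(z_i) ] with σ uniform on {−1,1}ⁿ. Then, with probability at least 1 − δ over a sample (z₁, …, zₙ) drawn i.i.d. from μ, one has R̂(z₁, …, zₙ) ≤ E_{S∼μⁿ}[R̂(S)] + B·√(log(2/δ)/(2n)). -/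
open MeasureTheory

/-- The empirical Rademacher complexity of a class `H` of real-valued functions on a
sample `z : Fin n → Z`:
`R̂(z) = E_σ[ sup_{h ∈ H} (1/n) Σ_i σ_i h(z_i) ]`, with `σ` uniform on `{−1,1}ⁿ`. -/
noncomputable def empRademacher {Z : Type*} (H : Set (Z → ℝ)) (n : ℕ)
    (z : Fin n → Z) : ℝ :=
  (∑ σ : Fin n → Bool,
      sSup ((fun h : Z → ℝ =>
        (1 / (n : ℝ)) * ∑ i, (if σ i then (1 : ℝ) else -1) * h (z i)) '' H)) / 2 ^ n


section McDiarmidAux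
open Real MeasureTheory

lemma aux_log_bound {γ h : ℝ} (hγ0 : 0 ≤ γ) (hγ1 : γ ≤ 1) (hh : 0 ≤ h) :
    Real.log (1 - γ + γ * Real.exp h) ≤ γ * h + h ^ 2 / 8 := by
  set D : ℝ → ℝ := fun x => 1 - γ + γ * Real.exp x with hDdef
  have hD1 : ∀ x, 0 ≤ x → 1 ≤ D x := by
    intro x hx
    have h1 : 1 ≤ Real.exp x := Real.one_le_exp hx
    simp only [hDdef]; nlinarith
  have hD0 : ∀ x, 0 ≤ x → D x ≠ 0 := fun x hx => by
    have := hD1 x hx; linarith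
  -- derivative of D
  have hDd : ∀ x, HasDerivAt D (γ * Real.exp x) x := by
    intro x
    exact ((Real.hasDerivAt_exp x).const_mul γ).const_add (1 - γ)
  set ψ : ℝ → ℝ := fun x => γ + x / 4 - γ * Real.exp x / D x with hψdef
  set φ : ℝ → ℝ := fun x => γ * x + x ^ 2 / 8 - Real.log (D x) with hφdef
  -- derivative of ψ
  have hψd : ∀ x, 0 ≤ x → HasDerivAt ψ
      (1 / 4 - (γ * Real.exp x * D x - γ * Real.exp x * (γ * Real.exp x)) / (D x) ^ 2) x := by
    intro x hx
    have hu : HasDerivAt (fun y => γ * Real.exp y) (γ * Real.exp x) x :=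
      (Real.hasDerivAt_exp x).const_mul γ
    have hdiv : HasDerivAt (fun y => γ * Real.exp y / D y)
        ((γ * Real.exp x * D x - γ * Real.exp x * (γ * Real.exp x)) / (D x) ^ 2) x :=
      hu.div (hDd x) (hD0 x hx)
    have hlin : HasDerivAt (fun y : ℝ => γ + y / 4) (1 / 4) x := by
      simpa using ((hasDerivAt_id x).div_const 4).const_add γ
    exact hlin.sub hdiv
  -- ψ' ≥ 0 on [0,∞)
  have hψ_nonneg : ∀ x, 0 ≤ x →
      0 ≤ 1 / 4 - (γ * Real.exp x * D x - γ * Real.exp x * (γ * Real.exp x)) / (D x) ^ 2 := by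
    intro x hx
    have hD1' := hD1 x hx
    have hE : 0 ≤ γ * Real.exp x := mul_nonneg hγ0 (Real.exp_pos x).le
    have hA : (0:ℝ) ≤ 1 - γ := by linarith
    have hDx : D x = (1 - γ) + γ * Real.exp x := by simp [hDdef]
    rw [sub_nonneg, div_le_iff₀ (by positivity)]
    nlinarith [sq_nonneg ((1 - γ) - γ * Real.exp x)]
  -- ψ monotone on [0,∞)
  have hψmono : MonotoneOn ψ (Set.Ici 0) := by
    apply monotoneOn_of_deriv_nonneg (convex_Ici 0)
    · intro x hx
      exact ((hψd x hx).continuousAt).continuousWithinAt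
    · intro x hx
      rw [interior_Ici] at hx
      exact ((hψd x (le_of_lt hx)).differentiableAt).differentiableWithinAt
    · intro x hx
      rw [interior_Ici] at hx
      rw [(hψd x (le_of_lt hx)).deriv]
      exact hψ_nonneg x (le_of_lt hx)
  have hψ0 : ψ 0 = 0 := by simp [hψdef, hDdef]
  have hψnn : ∀ x, 0 ≤ x → 0 ≤ ψ x := by
    intro x hx
    have := hψmono (Set.mem_Ici.2 le_rfl) hx hx
    rwa [hψ0] at this
  -- derivative of φ is ψ
  have hφd : ∀ x, 0 ≤ x → HasDerivAt φ (ψ x) x := by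
    intro x hx
    have hlog : HasDerivAt (fun y => Real.log (D y)) (γ * Real.exp x / D x) x := by
      rw [div_eq_inv_mul]; exact (Real.hasDerivAt_log (hD0 x hx)).comp x (hDd x)
    have hlin : HasDerivAt (fun y : ℝ => γ * y + y ^ 2 / 8) (γ + x * 2 / 8) x := by
      have h1 : HasDerivAt (fun y : ℝ => γ * y) γ x := by
        simpa using (hasDerivAt_id x).const_mul γ
      have h2 : HasDerivAt (fun y : ℝ => y ^ 2 / 8) (2 * x ^ 1 / 8) x :=
        (hasDerivAt_pow 2 x).div_const 8
      exact (h1.add h2).congr_deriv (by ring)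
    have := hlin.sub hlog
    exact this.congr_deriv (by simp only [hψdef]; ring)
  have hφmono : MonotoneOn φ (Set.Ici 0) := by
    apply monotoneOn_of_deriv_nonneg (convex_Ici 0)
    · intro x hx
      exact ((hφd x hx).continuousAt).continuousWithinAt
    · intro x hx
      rw [interior_Ici] at hx
      exact ((hφd x (le_of_lt hx)).differentiableAt).differentiableWithinAt
    · intro x hx
      rw [interior_Ici] at hx
      rw [(hφd x (le_of_lt hx)).deriv]
      exact hψnn x (le_of_lt hx)
  have hφ0 : φ 0 = 0 := by simp [hφdef, hDdef]
  have := hφmono (Set.mem_Ici.2 le_rfl) (Set.mem_Ici.2 hh) hh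
  rw [hφ0] at this
  simp only [hφdef, hDdef] at this
  linarith

lemma hoeffding_lemma {Ω : Type*} [MeasurableSpace Ω] (ν : Measure Ω) [IsProbabilityMeasure ν]
    (X : Ω → ℝ) (hX : Measurable X) {a c t : ℝ} (hc : 0 ≤ c) (ht : 0 ≤ t)
    (hmem : ∀ ω, X ω ∈ Set.Icc a (a + c)) (h0 : ∫ ω, X ω ∂ν = 0) :
    ∫ ω, Real.exp (t * X ω) ∂ν ≤ Real.exp (t ^ 2 * c ^ 2 / 8) := by
  -- integrability of X and exp(tX)
  have hXint : Integrable X ν := by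
    refine Integrable.mono' (integrable_const (|a| + c)) hX.aestronglyMeasurable ?_
    filter_upwards with ω
    have := hmem ω
    rw [Real.norm_eq_abs, abs_le]
    constructor
    · have := this.1; cases abs_cases a with
      | inl h => nlinarith [h.1]
      | inr h => nlinarith [h.1]
    · have := this.2; cases abs_cases a with
      | inl h => nlinarith [h.1]
      | inr h => nlinarith [h.1]
  have hexpint : Integrable (fun ω => Real.exp (t * X ω)) ν := by
    refine Integrable.mono' (integrable_const (Real.exp (t * (|a| + c)))) ?_ ?_
    · exact (hX.const_mul t).exp.aestronglyMeasurable
    · filter_upwards with ω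
      rw [Real.norm_eq_abs, abs_of_pos (Real.exp_pos _), Real.exp_le_exp]
      have h1 := (hmem ω).1; have h2 := (hmem ω).2
      have : X ω ≤ |a| + c := by cases abs_cases a with
        | inl h => nlinarith [h.1]
        | inr h => nlinarith [h.1]
      exact mul_le_mul_of_nonneg_left this ht
  rcases eq_or_lt_of_le hc with hc0 | hc0
  · -- c = 0 : X constant = a, and ∫X = 0 means a = 0
    have hXa : ∀ ω, X ω = a := fun ω => le_antisymm (by simpa [← hc0] using (hmem ω).2) (hmem ω).1
    have ha : a = 0 := by
      have : ∫ ω, X ω ∂ν = a := by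
        rw [integral_congr_ae (ae_of_all _ hXa)]; simp
      rw [this] at h0; exact h0
    have : ∀ ω, Real.exp (t * X ω) = 1 := fun ω => by simp [hXa ω, ha]
    rw [integral_congr_ae (ae_of_all _ this)]
    simp only [integral_const, probReal_univ, smul_eq_mul, one_mul]
    exact Real.one_le_exp (by positivity)
  -- main case c > 0
  have ha0 : a ≤ 0 := by
    have : a = ∫ _ω, a ∂ν := by simp
    rw [this, ← h0]
    exact integral_mono (integrable_const a) hXint (fun ω => (hmem ω).1)
  have hb0 : 0 ≤ a + c := by
    have : a + c = ∫ _ω, (a + c) ∂ν := by simp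
    rw [this, ← h0]
    exact integral_mono hXint (integrable_const _) (fun ω => (hmem ω).2)
  set γ : ℝ := -a / c with hγdef
  have hγ0 : 0 ≤ γ := div_nonneg (by linarith) hc -- hc? use hc0
  have hγ1 : γ ≤ 1 := by rw [div_le_one hc0]; linarith
  -- pointwise convexity bound
  have hptwise : ∀ ω, Real.exp (t * X ω) ≤
      ((a + c - X ω) / c) * Real.exp (t * a) + ((X ω - a) / c) * Real.exp (t * (a + c)) := by
    intro ω
    have h1 := (hmem ω).1; have h2 := (hmem ω).2
    have hl1 : 0 ≤ (a + c - X ω) / c := div_nonneg (by linarith) hc0.le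
    have hl2 : 0 ≤ (X ω - a) / c := div_nonneg (by linarith) hc0.le
    have hsum : (a + c - X ω) / c + (X ω - a) / c = 1 := by field_simp; ring
    have := convexOn_exp.2 (Set.mem_univ (t * a)) (Set.mem_univ (t * (a + c))) hl1 hl2 hsum
    simp only [smul_eq_mul] at this
    have heq : (a + c - X ω) / c * (t * a) + (X ω - a) / c * (t * (a + c)) = t * X ω := by
      field_simp; ring
    rwa [heq] at this
  -- integrate the bound
  set k1 : ℝ := (Real.exp (t * (a + c)) - Real.exp (t * a)) / c with hk1
  set k2 : ℝ := ((a + c) * Real.exp (t * a) - a * Real.exp (t * (a + c))) / c with hk2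
  have hptwise' : ∀ ω, Real.exp (t * X ω) ≤ k1 * X ω + k2 := by
    intro ω
    refine (hptwise ω).trans_eq ?_
    simp only [hk1, hk2]
    field_simp
    ring
  have hint : ∫ ω, Real.exp (t * X ω) ∂ν ≤ k2 := by
    calc ∫ ω, Real.exp (t * X ω) ∂ν
        ≤ ∫ ω, (k1 * X ω + k2) ∂ν :=
          integral_mono hexpint ((hXint.const_mul k1).add (integrable_const k2)) hptwise'
      _ = k2 := by
          rw [integral_add (hXint.const_mul k1) (integrable_const k2), integral_const_mul, h0]
          simp
  -- identify with exp(-gamma h) * D(h), h = t*c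
  have key : k2 = Real.exp (t * a) * (1 - γ + γ * Real.exp (t * c)) := by
    simp only [hk2, hγdef, show t * (a + c) = t * a + t * c by ring, Real.exp_add]
    field_simp
    ring
  rw [key] at hint
  refine hint.trans ?_
  have hD1 : (1:ℝ) ≤ 1 - γ + γ * Real.exp (t * c) := by
    nlinarith [Real.one_le_exp (mul_nonneg ht hc0.le), hγ0]
  have hlog := aux_log_bound hγ0 hγ1 (mul_nonneg ht hc0.le)
  have hta : t * a = -(γ * (t * c)) := by
    simp only [hγdef]; field_simp
  calc Real.exp (t * a) * (1 - γ + γ * Real.exp (t * c))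
      = Real.exp (t * a + Real.log (1 - γ + γ * Real.exp (t * c))) := by
        rw [Real.exp_add, Real.exp_log (by linarith)]
    _ ≤ Real.exp (t ^ 2 * c ^ 2 / 8) := by
        rw [Real.exp_le_exp, hta]
        have : (t * c) ^ 2 / 8 = t ^ 2 * c ^ 2 / 8 := by ring
        linarith [hlog, this.symm.le]

lemma mcdiarmid_mgf {Z : Type*} [MeasurableSpace Z] (μ : Measure Z) [IsProbabilityMeasure μ]
    {c t M : ℝ} (ht : 0 ≤ t) (hc : 0 ≤ c) :
    ∀ (n : ℕ) (f : (Fin n → Z) → ℝ), Measurable f → (∀ x, |f x| ≤ M) →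
    (∀ (x : Fin n → Z) (i : Fin n) (v : Z), |f (Function.update x i v) - f x| ≤ c) →
    ∫ x, Real.exp (t * f x) ∂(Measure.pi fun _ : Fin n => μ) ≤
      Real.exp (t * ∫ x, f x ∂(Measure.pi fun _ : Fin n => μ) + t ^ 2 * n * c ^ 2 / 8) := by
  have hZ : Nonempty Z := by
    by_contra h
    rw [not_nonempty_iff] at h
    have : (μ Set.univ) = 0 := by
      rw [Set.univ_eq_empty_iff.2 h]; simp
    simp [measure_univ] at this
  intro n
  induction n with
  | zero =>
    intro f hf hM hdiff
    have huniq : ∀ x : Fin 0 → Z, x = (default : Fin 0 → Z) := fun x => Subsingleton.elim _ _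
    rw [integral_unique, integral_unique]
    simp only [probReal_univ, one_smul]
    rw [Real.exp_le_exp]
    have : t ^ 2 * (0:ℕ) * c ^ 2 / 8 = 0 := by simp
    simp [this]
  | succ n IH =>
    intro f hf hM hdiff
    set π' : Measure (Fin n → Z) := Measure.pi fun _ : Fin n => μ with hπ'
    set P : Measure (Z × (Fin n → Z)) := μ.prod π' with hP
    set e := MeasurableEquiv.piFinSuccAbove (fun _ : Fin (n+1) => Z) 0 with he
    have hmp : MeasurePreserving e (Measure.pi fun _ : Fin (n+1) => μ) P :=
      measurePreserving_piFinSuccAbove (fun _ : Fin (n+1) => μ) 0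
    have hsymm : ∀ p : Z × (Fin n → Z), e.symm p = Fin.cons p.1 p.2 := by
      intro p
      simp [he, MeasurableEquiv.piFinSuccAbove, Fin.insertNthEquiv, Fin.insertNth_zero']
    have hc0 : 0 ≤ c := hc
    -- measurability facts
    have hconsm : ∀ y : Fin n → Z, Measurable (fun v : Z => f (Fin.cons v y)) := by
      intro y
      have heq : (fun v : Z => f (Fin.cons v y)) = (f ∘ e.symm) ∘ (fun v => (v, y)) := by
        funext v; simp [Function.comp, hsymm]
      rw [heq]
      exact (hf.comp e.symm.measurable).comp (measurable_id.prodMk measurable_const)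
    have hF : Measurable (fun p : Z × (Fin n → Z) => f (Fin.cons p.1 p.2)) := by
      have heq : (fun p : Z × (Fin n → Z) => f (Fin.cons p.1 p.2)) = f ∘ e.symm := by
        funext p; simp [Function.comp, hsymm]
      rw [heq]; exact hf.comp e.symm.measurable
    set g : (Fin n → Z) → ℝ := fun y => ∫ v, f (Fin.cons v y) ∂μ with hg
    have hgsm : StronglyMeasurable g := hF.stronglyMeasurable.integral_prod_left'
    have hgM : ∀ y, |g y| ≤ M := by
      intro y
      rw [← Real.norm_eq_abs]
      have := norm_integral_le_of_norm_le_const (μ := μ)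
        (f := fun v => f (Fin.cons v y)) (C := M) (by
          filter_upwards with v; rw [Real.norm_eq_abs]; exact hM _)
      simpa [measure_univ] using this
    have hintcons : ∀ y, Integrable (fun v => f (Fin.cons v y)) μ := by
      intro y
      refine Integrable.mono' (integrable_const M) (hconsm y).aestronglyMeasurable ?_
      filter_upwards with v; rw [Real.norm_eq_abs]; exact hM _
    have hgdiff : ∀ (y : Fin n → Z) (j : Fin n) (w : Z),
        |g (Function.update y j w) - g y| ≤ c := by
      intro y j w
      have key := norm_integral_le_of_norm_le_const (μ := μ)
        (f := fun v => f (Fin.cons v (Function.update y j w)) - f (Fin.cons v y)) (C := c) (by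
          filter_upwards with v
          rw [Real.norm_eq_abs, Fin.cons_update]
          exact hdiff _ _ _)
      simp only [probReal_univ, mul_one] at key
      calc |g (Function.update y j w) - g y|
          = ‖∫ v, (f (Fin.cons v (Function.update y j w)) - f (Fin.cons v y)) ∂μ‖ := by
            rw [Real.norm_eq_abs, integral_sub (hintcons _) (hintcons _)]
        _ ≤ c := key
    -- Hoeffding per slice
    have hper : ∀ y : Fin n → Z, ∫ v, Real.exp (t * f (Fin.cons v y)) ∂μ
        ≤ Real.exp (t * g y + t ^ 2 * c ^ 2 / 8) := by
      intro y
      set a : ℝ := ⨅ v : Z, f (Fin.cons v y) with ha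
      have hbdd : BddBelow (Set.range fun v : Z => f (Fin.cons v y)) := by
        refine ⟨-M, ?_⟩
        rintro x ⟨v, rfl⟩
        linarith [(abs_le.1 (hM (Fin.cons v y))).1]
      have hlow : ∀ v, a ≤ f (Fin.cons v y) := fun v => ciInf_le hbdd v
      have hup : ∀ v, f (Fin.cons v y) ≤ a + c := by
        intro v
        have h2 : f (Fin.cons v y) - c ≤ a := by
          apply le_ciInf
          intro w
          have h1 : f (Fin.cons v y) - f (Fin.cons w y) ≤ c := by
            have hd := hdiff (Fin.cons w y) 0 v
            rw [Fin.update_cons_zero] at hd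
            exact (abs_le.1 hd).2
          linarith
        linarith
      have hX : Measurable fun v => f (Fin.cons v y) - g y := (hconsm y).sub_const _
      have h0 : ∫ v, (f (Fin.cons v y) - g y) ∂μ = 0 := by
        rw [integral_sub (hintcons y) (integrable_const _)]
        simp [hg]
      have hmem : ∀ v, f (Fin.cons v y) - g y ∈ Set.Icc (a - g y) ((a - g y) + c) := by
        intro v
        exact ⟨by linarith [hlow v], by linarith [hup v]⟩
      have hH := hoeffding_lemma μ _ hX hc ht hmem h0
      calc ∫ v, Real.exp (t * f (Fin.cons v y)) ∂μ
          = Real.exp (t * g y) * ∫ v, Real.exp (t * (f (Fin.cons v y) - g y)) ∂μ := by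
            rw [← integral_const_mul]
            congr 1; funext v; rw [← Real.exp_add]; congr 1; ring
        _ ≤ Real.exp (t * g y) * Real.exp (t ^ 2 * c ^ 2 / 8) :=
            mul_le_mul_of_nonneg_left hH (Real.exp_pos _).le
        _ = Real.exp (t * g y + t ^ 2 * c ^ 2 / 8) := (Real.exp_add _ _).symm
    -- integrability on the product
    have hexpP : Integrable (fun p : Z × (Fin n → Z) => Real.exp (t * f (Fin.cons p.1 p.2))) P := by
      refine Integrable.mono' (integrable_const (Real.exp (t * M)))
        ((hF.const_mul t).exp.aestronglyMeasurable) ?_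
      filter_upwards with p
      rw [Real.norm_eq_abs, abs_of_pos (Real.exp_pos _), Real.exp_le_exp]
      exact mul_le_mul_of_nonneg_left (abs_le.1 (hM _)).2 ht
    have hfP : Integrable (fun p : Z × (Fin n → Z) => f (Fin.cons p.1 p.2)) P := by
      refine Integrable.mono' (integrable_const M) hF.aestronglyMeasurable ?_
      filter_upwards with p
      rw [Real.norm_eq_abs]; exact hM _
    -- transfer integrals from pi measure to product measure
    have htrans : ∀ φ : (Fin (n+1) → Z) → ℝ,
        ∫ z, φ z ∂(Measure.pi fun _ : Fin (n+1) => μ) = ∫ p, φ (Fin.cons p.1 p.2) ∂P := by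
      intro φ
      rw [← hmp.integral_comp e.measurableEmbedding (fun p => φ (Fin.cons p.1 p.2))]
      congr 1
      funext z
      rw [← hsymm (e z), MeasurableEquiv.symm_apply_apply]
    have hEf : ∫ z, f z ∂(Measure.pi fun _ : Fin (n+1) => μ) = ∫ y, g y ∂π' := by
      rw [htrans f, hP, integral_prod_symm _ hfP]
    have hgint : Integrable g π' := by
      refine Integrable.mono' (integrable_const M) hgsm.aestronglyMeasurable ?_
      filter_upwards with y; rw [Real.norm_eq_abs]; exact hgM y
    have hi1 : Integrable (fun y => ∫ v, Real.exp (t * f (Fin.cons v y)) ∂μ) π' := by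
      refine Integrable.mono' (integrable_const (Real.exp (t * M)))
        ((hF.const_mul t).exp.stronglyMeasurable.integral_prod_left').aestronglyMeasurable ?_
      filter_upwards with y
      have := norm_integral_le_of_norm_le_const (μ := μ)
        (f := fun v => Real.exp (t * f (Fin.cons v y))) (C := Real.exp (t * M)) (by
          filter_upwards with v
          rw [Real.norm_eq_abs, abs_of_pos (Real.exp_pos _), Real.exp_le_exp]
          exact mul_le_mul_of_nonneg_left (abs_le.1 (hM _)).2 ht)
      simpa [measure_univ] using this
    have hi2 : Integrable (fun y => Real.exp (t * g y + t ^ 2 * c ^ 2 / 8)) π' := by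
      refine Integrable.mono' (integrable_const (Real.exp (t * M + t ^ 2 * c ^ 2 / 8)))
        (((hgsm.measurable.const_mul t).add_const _).exp.aestronglyMeasurable) ?_
      filter_upwards with y
      rw [Real.norm_eq_abs, abs_of_pos (Real.exp_pos _), Real.exp_le_exp]
      have := mul_le_mul_of_nonneg_left (abs_le.1 (hgM y)).2 ht
      linarith
    rw [htrans (fun z => Real.exp (t * f z)), hEf]
    calc ∫ p, Real.exp (t * f (Fin.cons p.1 p.2)) ∂P
        = ∫ y, (∫ v, Real.exp (t * f (Fin.cons v y)) ∂μ) ∂π' := by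
          rw [hP, integral_prod_symm _ hexpP]
      _ ≤ ∫ y, Real.exp (t * g y + t ^ 2 * c ^ 2 / 8) ∂π' := integral_mono hi1 hi2 hper
      _ = Real.exp (t ^ 2 * c ^ 2 / 8) * ∫ y, Real.exp (t * g y) ∂π' := by
          simp_rw [Real.exp_add, mul_comm]
          rw [integral_const_mul]
      _ ≤ Real.exp (t ^ 2 * c ^ 2 / 8)
            * Real.exp (t * ∫ y, g y ∂π' + t ^ 2 * n * c ^ 2 / 8) :=
          mul_le_mul_of_nonneg_left (IH g hgsm.measurable hgM hgdiff) (Real.exp_pos _).le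
      _ = Real.exp (t * ∫ y, g y ∂π' + t ^ 2 * (n + 1 : ℕ) * c ^ 2 / 8) := by
          rw [← Real.exp_add]
          congr 1
          push_cast
          ring

lemma mcdiarmid_tail {Z : Type*} [MeasurableSpace Z] (μ : Measure Z) [IsProbabilityMeasure μ]
    (n : ℕ) (hn : 1 ≤ n) (f : (Fin n → Z) → ℝ) (hf : Measurable f) {M c ε : ℝ}
    (hM : ∀ x, |f x| ≤ M) (hc : 0 < c) (hε : 0 < ε)
    (hdiff : ∀ (x : Fin n → Z) (i : Fin n) (v : Z), |f (Function.update x i v) - f x| ≤ c) :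
    ((Measure.pi fun _ : Fin n => μ)
        {x | (∫ y, f y ∂(Measure.pi fun _ : Fin n => μ)) + ε ≤ f x}).toReal
      ≤ Real.exp (-2 * ε ^ 2 / (n * c ^ 2)) := by
  set Pn : Measure (Fin n → Z) := Measure.pi fun _ : Fin n => μ with hπ
  set E : ℝ := ∫ y, f y ∂Pn with hE
  set t : ℝ := 4 * ε / (n * c ^ 2) with htdef
  have hn0 : (0:ℝ) < n := by exact_mod_cast hn
  have ht : 0 < t := by positivity
  set X : (Fin n → Z) → ℝ := fun x => f x - E with hX
  have hXm : Measurable X := hf.sub_const E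
  have hint : Integrable (fun x => Real.exp (t * X x)) Pn := by
    refine Integrable.mono' (integrable_const (Real.exp (t * (M + |E|))))
      ((hXm.const_mul t).exp.aestronglyMeasurable) ?_
    filter_upwards with x
    rw [Real.norm_eq_abs, abs_of_pos (Real.exp_pos _), Real.exp_le_exp]
    have h1 : X x ≤ M + |E| := by
      have := (abs_le.1 (hM x)).2
      have := neg_abs_le E
      simp only [hX]; linarith
    exact mul_le_mul_of_nonneg_left h1 ht.le
  have hset : {x | E + ε ≤ f x} = {x | ε ≤ X x} := by
    ext x; simp only [Set.mem_setOf_eq, hX]; constructor <;> intro <;> linarith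
  rw [hset]
  have hcher := ProbabilityTheory.measure_ge_le_exp_mul_mgf (X := X) (μ := Pn) ε ht.le hint
  refine hcher.trans ?_
  -- bound the mgf
  have hmgf : ProbabilityTheory.mgf X Pn t ≤ Real.exp (t ^ 2 * n * c ^ 2 / 8) := by
    have hfint : Integrable f Pn := by
      refine Integrable.mono' (integrable_const M) hf.aestronglyMeasurable ?_
      filter_upwards with x; rw [Real.norm_eq_abs]; exact hM x
    have hmc := mcdiarmid_mgf μ ht.le hc.le n f hf hM hdiff
    have heq : ∀ x, Real.exp (t * X x) = Real.exp (-(t * E)) * Real.exp (t * f x) := by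
      intro x; rw [← Real.exp_add]; congr 1; simp only [hX]; ring
    rw [ProbabilityTheory.mgf]
    calc ∫ x, Real.exp (t * X x) ∂Pn
        = Real.exp (-(t * E)) * ∫ x, Real.exp (t * f x) ∂Pn := by
          simp_rw [heq]; rw [integral_const_mul]
      _ ≤ Real.exp (-(t * E)) * Real.exp (t * E + t ^ 2 * n * c ^ 2 / 8) := by
          exact mul_le_mul_of_nonneg_left hmc (Real.exp_pos _).le
      _ = Real.exp (t ^ 2 * n * c ^ 2 / 8) := by rw [← Real.exp_add]; congr 1; ring
  calc Real.exp (-t * ε) * ProbabilityTheory.mgf X Pn t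
      ≤ Real.exp (-t * ε) * Real.exp (t ^ 2 * n * c ^ 2 / 8) :=
        mul_le_mul_of_nonneg_left hmgf (Real.exp_pos _).le
    _ = Real.exp (-t * ε + t ^ 2 * n * c ^ 2 / 8) := (Real.exp_add _ _).symm
    _ = Real.exp (-2 * ε ^ 2 / (n * c ^ 2)) := by
        congr 1
        simp only [htdef]
        field_simp
        ring

lemma csSup_image_le_add {α : Type*} (F G : α → ℝ) (H : Set α) (hne : H.Nonempty)
    (bG : BddAbove (G '' H)) {c : ℝ} (hpt : ∀ h ∈ H, F h ≤ G h + c) :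
    sSup (F '' H) ≤ sSup (G '' H) + c := by
  apply csSup_le (hne.image F)
  rintro x ⟨h, hh, rfl⟩
  exact (hpt h hh).trans (add_le_add_left (le_csSup bG ⟨h, hh, rfl⟩) c)


end McDiarmidAux

/-- With probability at least `1 − δ` over an i.i.d. sample of size `n`
from `μ`, the empirical Rademacher complexity of a countable class `H` with values in
`[0, B]` exceeds its expectation by at most `B·√(log(2/δ)/(2n))`. -/
theorem empRademacher_concentration {Z : Type*} [MeasurableSpace Z]
    (μ : Measure Z) [IsProbabilityMeasure μ]
    (n : ℕ) (hn : 1 ≤ n)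
    (H : Set (Z → ℝ)) (hH : H.Nonempty) (hHc : H.Countable)
    (hmeas : ∀ h ∈ H, Measurable h)
    (B : ℝ) (hB : 0 < B)
    (hbd : ∀ h ∈ H, ∀ z : Z, h z ∈ Set.Icc (0 : ℝ) B)
    (δ : ℝ) (hδ0 : 0 < δ) (hδ1 : δ < 1) :
    ENNReal.ofReal (1 - δ) ≤
      (Measure.pi fun _ : Fin n => μ)
        {z | empRademacher H n z ≤
          (∫ w, empRademacher H n w ∂(Measure.pi fun _ : Fin n => μ))
            + B * Real.sqrt (Real.log (2 / δ) / (2 * n))} := by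

  obtain ⟨u, hu⟩ := Set.Countable.exists_eq_range hHc hH
  have huH : ∀ k, u k ∈ H := fun k => hu ▸ ⟨k, rfl⟩
  have hn0 : (0:ℝ) < n := by exact_mod_cast hn
  set s : (Fin n → Bool) → Fin n → ℝ := fun σ i => if σ i then (1:ℝ) else -1 with hs
  have hsabs : ∀ σ i, |s σ i| = 1 := by intro σ i; simp only [hs]; split <;> simp
  set F : (Fin n → Bool) → (Fin n → Z) → (Z → ℝ) → ℝ :=
    fun σ z h => (1 / (n : ℝ)) * ∑ i, s σ i * h (z i) with hFdef
  have hFbound : ∀ σ z h, h ∈ H → |F σ z h| ≤ B := by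
    intro σ z h hh
    simp only [hFdef]
    rw [abs_mul, abs_of_pos (by positivity : (0:ℝ) < 1/(n:ℝ))]
    have habs : |∑ i, s σ i * h (z i)| ≤ (n:ℝ) * B := by
      refine (Finset.abs_sum_le_sum_abs _ _).trans ?_
      have : ∀ i ∈ Finset.univ, |s σ i * h (z i)| ≤ B := by
        intro i _
        rw [abs_mul, hsabs, one_mul, abs_le]
        have h1 := (hbd h hh (z i)).1
        have h2 := (hbd h hh (z i)).2
        exact ⟨by linarith, h2⟩
      calc ∑ i, |s σ i * h (z i)| ≤ ∑ _i : Fin n, B := Finset.sum_le_sum this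
        _ = (n:ℝ) * B := by rw [Finset.sum_const, Finset.card_univ, Fintype.card_fin,
            nsmul_eq_mul]
    calc 1/(n:ℝ) * |∑ i, s σ i * h (z i)| ≤ 1/(n:ℝ) * ((n:ℝ) * B) := by
          exact mul_le_mul_of_nonneg_left habs (by positivity)
      _ = B := by field_simp
  have hbddA : ∀ σ z, BddAbove ((F σ z) '' H) := by
    intro σ z
    exact ⟨B, by rintro x ⟨h, hh, rfl⟩; exact (abs_le.1 (hFbound σ z h hh)).2⟩
  set T : (Fin n → Bool) → (Fin n → Z) → ℝ := fun σ z => sSup ((F σ z) '' H) with hT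
  have hTbound : ∀ σ z, |T σ z| ≤ B := by
    intro σ z
    rw [abs_le]
    constructor
    · calc -B ≤ F σ z (u 0) := (abs_le.1 (hFbound σ z _ (huH 0))).1
        _ ≤ T σ z := le_csSup (hbddA σ z) ⟨u 0, huH 0, rfl⟩
    · exact csSup_le (hH.image _) (by rintro x ⟨h, hh, rfl⟩; exact (abs_le.1 (hFbound σ z h hh)).2)
  have hRdef : ∀ z, empRademacher H n z = (∑ σ : Fin n → Bool, T σ z) / 2 ^ n := by
    intro z; rfl
  -- measurability
  have hTmeas : ∀ σ, Measurable (T σ) := by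
    intro σ
    have himg : ∀ z : Fin n → Z, (F σ z) '' H = Set.range (fun k => F σ z (u k)) := by
      intro z; rw [hu, ← Set.range_comp]; rfl
    have : T σ = fun z => ⨆ k, F σ z (u k) := by
      funext z; rw [hT]; simp only; rw [himg z]; rfl
    rw [this]
    refine Measurable.iSup fun k => ?_
    simp only [hFdef]
    refine Measurable.const_mul ?_ _
    exact Finset.measurable_sum _ fun i _ =>
      ((hmeas (u k) (huH k)).comp (measurable_pi_apply i)).const_mul _
  have hRmeas : Measurable (empRademacher H n) := by
    have : empRademacher H n = fun z => (∑ σ : Fin n → Bool, T σ z) / 2 ^ n := rfl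
    rw [this]
    exact (Finset.measurable_sum _ fun σ _ => hTmeas σ).div_const _
  -- boundedness
  have hRbound : ∀ z, |empRademacher H n z| ≤ B := by
    intro z
    rw [hRdef, abs_div, abs_of_pos (by positivity : (0:ℝ) < 2 ^ n), div_le_iff₀ (by positivity)]
    calc |∑ σ : Fin n → Bool, T σ z| ≤ ∑ σ : Fin n → Bool, |T σ z| :=
          Finset.abs_sum_le_sum_abs _ _
      _ ≤ ∑ _σ : Fin n → Bool, B := Finset.sum_le_sum fun σ _ => hTbound σ z
      _ = B * 2 ^ n := by
          rw [Finset.sum_const, Finset.card_univ, nsmul_eq_mul]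
          simp [mul_comm]
  -- bounded differences
  have hTdiff : ∀ σ (z : Fin n → Z) (i : Fin n) (v : Z),
      |T σ (Function.update z i v) - T σ z| ≤ B / n := by
    intro σ z i v
    have hdiffval : ∀ h ∈ H, |F σ (Function.update z i v) h - F σ z h| ≤ B / n := by
      intro h hh
      simp only [hFdef]
      rw [← mul_sub, ← Finset.sum_sub_distrib]
      have hsum : ∑ i', (s σ i' * h (Function.update z i v i') - s σ i' * h (z i'))
          = s σ i * (h v - h (z i)) := by
        rw [Finset.sum_eq_single i]
        · rw [Function.update_self]; ring
        · intro j _ hj; rw [Function.update_of_ne hj]; ring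
        · intro hi; exact absurd (Finset.mem_univ i) hi
      rw [hsum, abs_mul, abs_mul, hsabs, one_mul,
        abs_of_pos (by positivity : (0:ℝ) < 1/(n:ℝ))]
      have h3 : |h v - h (z i)| ≤ B := by
        have hv1 := (hbd h hh v).1; have hv2 := (hbd h hh v).2
        have hz1 := (hbd h hh (z i)).1; have hz2 := (hbd h hh (z i)).2
        rw [abs_le]; exact ⟨by linarith, by linarith⟩
      calc 1/(n:ℝ) * |h v - h (z i)| ≤ 1/(n:ℝ) * B :=
            mul_le_mul_of_nonneg_left h3 (by positivity)
        _ = B / n := by ring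
    rw [abs_sub_le_iff]
    constructor
    · rw [sub_le_iff_le_add, add_comm]
      exact csSup_image_le_add (F σ (Function.update z i v)) (F σ z) H hH (hbddA σ z)
        (fun h hh => by linarith [(abs_le.1 (hdiffval h hh)).2])
    · rw [sub_le_iff_le_add, add_comm]
      exact csSup_image_le_add (F σ z) (F σ (Function.update z i v)) H hH
        (hbddA σ (Function.update z i v))
        (fun h hh => by linarith [(abs_le.1 (hdiffval h hh)).1])
  have hRdiff : ∀ (z : Fin n → Z) (i : Fin n) (v : Z),
      |empRademacher H n (Function.update z i v) - empRademacher H n z| ≤ B / n := by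
    intro z i v
    rw [hRdef, hRdef, div_sub_div_same, abs_div,
      abs_of_pos (by positivity : (0:ℝ) < 2 ^ n), div_le_iff₀ (by positivity)]
    rw [← Finset.sum_sub_distrib]
    calc |∑ σ : Fin n → Bool, (T σ (Function.update z i v) - T σ z)|
        ≤ ∑ σ : Fin n → Bool, |T σ (Function.update z i v) - T σ z| :=
          Finset.abs_sum_le_sum_abs _ _
      _ ≤ ∑ _σ : Fin n → Bool, B / n := Finset.sum_le_sum fun σ _ => hTdiff σ z i v
      _ = B / n * 2 ^ n := by
          rw [Finset.sum_const, Finset.card_univ, nsmul_eq_mul]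
          simp [mul_comm]
  -- now apply the tail bound
  set Pn : Measure (Fin n → Z) := Measure.pi fun _ : Fin n => μ with hPn
  set E : ℝ := ∫ w, empRademacher H n w ∂Pn with hE
  set ε : ℝ := B * Real.sqrt (Real.log (2 / δ) / (2 * n)) with hεdef
  have hlogpos : 0 < Real.log (2 / δ) := Real.log_pos (by rw [lt_div_iff₀ hδ0]; linarith)
  have hε : 0 < ε := by
    apply mul_pos hB
    apply Real.sqrt_pos.2
    positivity
  have htail := mcdiarmid_tail μ n hn (empRademacher H n) hRmeas hRbound
    (by positivity : (0:ℝ) < B / n) hε hRdiff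
  have hexp : Real.exp (-2 * ε ^ 2 / ((n:ℝ) * (B / n) ^ 2)) = δ / 2 := by
    have hsq : ε ^ 2 = B ^ 2 * (Real.log (2 / δ) / (2 * n)) := by
      rw [hεdef, mul_pow, Real.sq_sqrt (by positivity)]
    have harg : -2 * ε ^ 2 / ((n:ℝ) * (B / n) ^ 2) = -Real.log (2 / δ) := by
      rw [hsq]
      field_simp
    rw [harg, Real.exp_neg, Real.exp_log (by positivity)]
    rw [inv_div]
  rw [hexp] at htail
  -- from toReal bound to ENNReal bound on complement
  set A : Set (Fin n → Z) := {z | empRademacher H n z ≤ E + ε} with hA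
  have hsub : Aᶜ ⊆ {x | E + ε ≤ empRademacher H n x} := by
    intro x hx
    simp only [hA, Set.mem_compl_iff, Set.mem_setOf_eq, not_le] at hx
    exact le_of_lt hx
  have hcompl : Pn Aᶜ ≤ ENNReal.ofReal (δ / 2) := by
    refine le_trans (measure_mono hsub) ?_
    rw [ENNReal.le_ofReal_iff_toReal_le (measure_ne_top _ _) (by positivity)]
    exact htail
  have h1 : (1:ENNReal) ≤ Pn A + ENNReal.ofReal (δ / 2) := by
    calc (1:ENNReal) = Pn Set.univ := measure_univ.symm
      _ = Pn (A ∪ Aᶜ) := by rw [Set.union_compl_self]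
      _ ≤ Pn A + Pn Aᶜ := measure_union_le _ _
      _ ≤ Pn A + ENNReal.ofReal (δ / 2) := add_le_add_right hcompl _
  have h2 : ENNReal.ofReal (1 - δ) + ENNReal.ofReal (δ / 2) ≤ 1 := by
    rw [← ENNReal.ofReal_add (by linarith) (by linarith), ← ENNReal.ofReal_one]
    exact ENNReal.ofReal_le_ofReal (by linarith)
  calc ENNReal.ofReal (1 - δ) ≤ 1 - ENNReal.ofReal (δ / 2) :=
        ENNReal.le_sub_of_add_le_right ENNReal.ofReal_ne_top h2
    _ ≤ Pn A := tsub_le_iff_right.2 h1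
end
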